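/- arXiv:2301.04403 — 2 statements merged into one kernel-verified Lean document; each statement's English description precedes it below -/
import Mathlib

section
/- Let r > 1/2. There exists a constant C = C(r) > 0 such that for all f, g ∈ H^r(𝕋): ‖J^{−1}( g · (J f) )‖_r ≤ C ‖f‖_r ‖g‖_r. -/
open MeasureTheory Complex

noncomputable section

local notation "𝕋" => AddCircle (2 * Real.pi)

instance : Fact (0 < 2 * Real.pi) := ⟨by positivity⟩

def fc (f : 𝕋 → ℂ) (k : ℤ) : ℂ := fourierCoeff f k

def sNormSq (α : ℝ) (f : 𝕋 → ℂ) : ℝ :=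
  ∑' k : ℤ, (1 + (k : ℝ) ^ 2) ^ α * ‖fc f k‖ ^ 2

def sNorm (α : ℝ) (f : 𝕋 → ℂ) : ℝ := Real.sqrt (sNormSq α f)

def MemH (α : ℝ) (f : 𝕋 → ℂ) : Prop :=
  MemLp f 2 volume ∧ Summable fun k : ℤ => (1 + (k : ℝ) ^ 2) ^ α * ‖fc f k‖ ^ 2

def mulOp (m : ℤ → ℂ) (f : 𝕋 → ℂ) : 𝕋 → ℂ :=
  fun x => ∑' k : ℤ, m k * fc f k * fourier k x

def cconj (f : 𝕋 → ℂ) : 𝕋 → ℂ := fun x => (starRingEnd ℂ) (f x)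

/-- Bessel potential `J^α`, with symbol `(1+k²)^{α/2}`. -/
def Jop (α : ℝ) : (𝕋 → ℂ) → (𝕋 → ℂ) :=
  mulOp fun k => (((1 + (k : ℝ) ^ 2) ^ (α / 2) : ℝ) : ℂ)

/-- The operator `|∂ₓ|^α`, with symbol `|k|^α` for `k ≠ 0`, annihilating the zero mode. -/
def absD (α : ℝ) : (𝕋 → ℂ) → (𝕋 → ℂ) :=
  mulOp fun k => if k = 0 then 0 else ((|(k : ℝ)| ^ α : ℝ) : ℂ)

/-- `∂ₓ^m` for `m : ℤ`: symbol `(ik)^m` for `k ≠ 0`, annihilating the zero mode. -/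
def Dpow (m : ℤ) : (𝕋 → ℂ) → (𝕋 → ℂ) :=
  mulOp fun k => if k = 0 then 0 else (Complex.I * (k : ℂ)) ^ m

/-- Symbol of `⟨∂ₓ²⟩`: `√(k² + k⁴)`. -/
def brSym (k : ℤ) : ℝ := Real.sqrt ((k : ℝ) ^ 2 + (k : ℝ) ^ 4)

/-- `e^{it∂ₓ²}`, with symbol `e^{-itk²}`. -/
def eitDxx (t : ℝ) : (𝕋 → ℂ) → (𝕋 → ℂ) :=
  mulOp fun k => Complex.exp (-(Complex.I * t * (k : ℂ) ^ 2))

/-- `e^{it∂ₓ²} - 1`, with symbol `e^{-itk²} - 1`. -/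
def eitDxxm1 (t : ℝ) : (𝕋 → ℂ) → (𝕋 → ℂ) :=
  mulOp fun k => Complex.exp (-(Complex.I * t * (k : ℂ) ^ 2)) - 1

/-- `⟨∂ₓ²⟩⁻¹`, symbol `(k²+k⁴)^{-1/2}` for `k ≠ 0`, `0` at `k = 0`. -/
def brInv : (𝕋 → ℂ) → (𝕋 → ℂ) :=
  mulOp fun k => if k = 0 then 0 else (((brSym k)⁻¹ : ℝ) : ℂ)

/-- Symbol of `A = ⟨∂ₓ²⟩ + ∂ₓ²`: `√(k²+k⁴) - k²`. -/
def Asym (k : ℤ) : ℝ := brSym k - (k : ℝ) ^ 2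

/-- `A = ⟨∂ₓ²⟩ + ∂ₓ²`. -/
def Aop : (𝕋 → ℂ) → (𝕋 → ℂ) := mulOp fun k => ((Asym k : ℝ) : ℂ)

/-- `e^{itA} - 1`. -/
def eitAm1 (t : ℝ) : (𝕋 → ℂ) → (𝕋 → ℂ) :=
  mulOp fun k => Complex.exp (Complex.I * t * ((Asym k : ℝ) : ℂ)) - 1

/-- Symbol of `B = ⟨∂ₓ²⟩⁻¹ ∂ₓ²`: `-k²/√(k²+k⁴)` for `k ≠ 0`, `0` at `k = 0`. -/
def Bsym (k : ℤ) : ℝ := if k = 0 then 0 else -(k : ℝ) ^ 2 / brSym k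

/-- `B = ⟨∂ₓ²⟩⁻¹ ∂ₓ²`. -/
def Bop : (𝕋 → ℂ) → (𝕋 → ℂ) := mulOp fun k => ((Bsym k : ℝ) : ℂ)

/-- `e^{it⟨∂ₓ²⟩}`, with symbol `e^{it√(k²+k⁴)}`. -/
def eitBr (t : ℝ) : (𝕋 → ℂ) → (𝕋 → ℂ) :=
  mulOp fun k => Complex.exp (Complex.I * t * ((brSym k : ℝ) : ℂ))

/-- `e^{it⟨∂ₓ²⟩} - 1`. -/
def eitBrm1 (t : ℝ) : (𝕋 → ℂ) → (𝕋 → ℂ) :=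
  mulOp fun k => Complex.exp (Complex.I * t * ((brSym k : ℝ) : ℂ)) - 1

/-- `B^τ = B e^{iτ⟨∂ₓ²⟩}`, as a single multiplier. -/
def Btau (τ : ℝ) : (𝕋 → ℂ) → (𝕋 → ℂ) :=
  mulOp fun k => ((Bsym k : ℝ) : ℂ) * Complex.exp (Complex.I * τ * ((brSym k : ℝ) : ℂ))

/-- `ψ₁(y) = ∫₀¹ e^{ys} ds`. -/
def psi1 (y : ℂ) : ℂ := ∫ s in (0 : ℝ)..1, Complex.exp (y * s)

/-- `ψ₁(it∂ₓ²)`, with symbol `ψ₁(-itk²)`. -/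
def psiOp (t : ℝ) : (𝕋 → ℂ) → (𝕋 → ℂ) :=
  mulOp fun k => psi1 (-(Complex.I * t * (k : ℂ) ^ 2))

/-- Sobolev norm (squared) of a Fourier coefficient sequence. -/
def seqNormSq (α : ℝ) (c : ℤ → ℂ) : ℝ :=
  ∑' k : ℤ, (1 + (k : ℝ) ^ 2) ^ α * ‖c k‖ ^ 2

def seqNorm (α : ℝ) (c : ℤ → ℂ) : ℝ := Real.sqrt (seqNormSq α c)

/-- Fourier coefficients of `P₁^τ(f)`. -/
def P1coef (τ : ℝ) (f : 𝕋 → ℂ) (k : ℤ) : ℂ :=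
  if k = 0 then 0 else
    ∑' k₁ : ℤ, ((k₁ : ℂ) ^ 2 / (k : ℂ) ^ 2) *
      (∫ s in (0 : ℝ)..τ,
        (Complex.exp (-(2 * Complex.I * s * (((k - k₁ : ℤ)) : ℂ) ^ 2)) - 1) *
        (Complex.exp (-(2 * Complex.I * s * (k : ℂ) * (k₁ : ℂ))) - 1)) *
      fc (cconj f) k₁ * fc (cconj f) (k - k₁)

/-- Fourier coefficients of `P₂^τ(f)`. -/
def P2coef (τ : ℝ) (f : 𝕋 → ℂ) (k : ℤ) : ℂ :=
  if k = 0 then 0 else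
    ∑' k₁ : ℤ, ((2 * (k₁ : ℂ) * (((k - k₁ : ℤ)) : ℂ)) / (k : ℂ) ^ 2) *
      (∫ s in (0 : ℝ)..τ,
        (Complex.exp (-(2 * Complex.I * s * (k : ℂ) ^ 2)) - 1) *
        (Complex.exp (2 * Complex.I * s * (k₁ : ℂ) * (((k - k₁ : ℤ)) : ℂ)) - 1)) *
      fc (cconj f) k₁ * fc (cconj f) (k - k₁)

def L1op (τ : ℝ) (f : 𝕋 → ℂ) : 𝕋 → ℂ :=
  (-(Complex.I / 2)) • Dpow (-2) ((eitDxx (2 * τ) (Dpow (-2) (cconj f))) * (Dpow 2 (cconj f)))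
    + (Complex.I / 2) • Dpow (-2) ((Dpow 2 (cconj f)) * (Dpow (-2) (cconj f)))

def L2op (τ : ℝ) (f : 𝕋 → ℂ) : 𝕋 → ℂ :=
  (-(Complex.I / 2)) • eitDxx τ (Dpow (-3) ((eitDxx τ (Dpow 1 (cconj f))) * (eitDxx (-τ) (cconj f))))
    + (Complex.I / 2) • Dpow (-3) ((Dpow 1 (cconj f)) * (cconj f))
    - (τ : ℂ) • Dpow (-2) ((Dpow 2 (cconj f)) * (cconj f))

def L3op (τ : ℝ) (f : 𝕋 → ℂ) : 𝕋 → ℂ :=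
  (-Complex.I) • Dpow (-4) (eitDxxm1 (2 * τ) ((Dpow 1 (cconj f)) * (Dpow 1 (cconj f))))

def L4op (τ : ℝ) (f : 𝕋 → ℂ) : 𝕋 → ℂ :=
  Complex.I • Dpow (-2) (eitDxx (-τ) ((eitDxx τ (cconj f)) * (eitDxx τ (cconj f))))
    - Complex.I • Dpow (-2) ((cconj f) * (cconj f))
    - ((2 * τ : ℝ) : ℂ) • Dpow (-2) ((Dpow 1 (cconj f)) * (Dpow 1 (cconj f)))

def I1op (τ : ℝ) (f : 𝕋 → ℂ) : 𝕋 → ℂ :=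
  (Complex.I / 2) • ((Dpow (-1) f) * (Dpow (-1) f)
    - eitDxx τ ((eitDxx (-τ) (Dpow (-1) f)) * (eitDxx (-τ) (Dpow (-1) f))))

def I2op (τ : ℝ) (f : 𝕋 → ℂ) : 𝕋 → ℂ :=
  (-(Complex.I / 2)) • eitDxx τ (Dpow (-1) ((eitDxx (-τ) f) * (eitDxx τ (Dpow (-1) (cconj f)))))
    + (Complex.I / 2) • Dpow (-1) (f * (Dpow (-1) (cconj f)))
    + fun _ => ((τ * sNormSq 0 f : ℝ) : ℂ)

/-- The first-order low regularity exponential integrator `Ψ₁^τ` at time level `t_n`. -/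
def Psi1 (τ a b tn : ℝ) (f : 𝕋 → ℂ) : 𝕋 → ℂ :=
  eitBr τ f
    - (Complex.I / 4) • Btau τ ((2 : ℂ) • L1op τ f + (2 : ℂ) • L2op τ f + L3op τ f
        + L4op τ f + I1op τ f + (2 : ℂ) • I2op τ f)
    - (Complex.I * τ * ((a * tn + b : ℝ) : ℂ)) • Btau τ (f + psiOp (2 * τ) (cconj f))

/-- The additional-regularity exponent `p(r)` (with parameter `ε` standing for `+`). -/
def preg (ε r : ℝ) : ℝ :=
  if r = 1 then 1
  else if r ≤ 7/6 then 3 - 2*r + ε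
  else if r ≤ 17/12 then 2/3
  else if r ≤ 3/2 then 7/2 - 2*r + ε
  else if r < 5/2 then 5/4 - r/2
  else if r = 5/2 then ε
  else 0

/-- The additional-regularity exponent `q(r)` for `P₂`. -/
def qreg (r : ℝ) : ℝ := if r ≤ 5/2 then 5/4 - r/2 else 0


section AuxCorpus
open ENNReal NNReal AddCircle


def W (k : ℤ) : ℝ := 1 + (k:ℝ)^2

lemma W_pos (k : ℤ) : 0 < W k := by unfold W; positivity
lemma one_le_W (k : ℤ) : 1 ≤ W k := by unfold W; nlinarith [sq_nonneg (k:ℝ)]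

/-- `ofReal ((W k) ^ e)` -/
def owr (e : ℝ) (k : ℤ) : ℝ≥0∞ := ENNReal.ofReal ((W k) ^ e)

lemma owr_mul (e e' : ℝ) (k : ℤ) : owr e k * owr e' k = owr (e+e') k := by
  unfold owr
  rw [← ENNReal.ofReal_mul (Real.rpow_nonneg (W_pos k).le _), ← Real.rpow_add (W_pos k)]

lemma owr_sq (e : ℝ) (k : ℤ) : (owr e k)^2 = owr (2*e) k := by
  rw [sq, owr_mul]; ring_nf

lemma owr_zero (k : ℤ) : owr 0 k = 1 := by
  unfold owr; rw [Real.rpow_zero, ENNReal.ofReal_one]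

-- from t1
lemma sqrtW_tri (a b : ℝ) : Real.sqrt (1+(a+b)^2) ≤ Real.sqrt (1+a^2) + Real.sqrt (1+b^2) := by
  have ha := Real.sq_sqrt (by positivity : (0:ℝ) ≤ 1+a^2)
  have hb := Real.sq_sqrt (by positivity : (0:ℝ) ≤ 1+b^2)
  have h1 : Real.sqrt (1+a^2) * Real.sqrt (1+b^2) ≥ 1 + a*b := by
    rw [← Real.sqrt_mul (by positivity)]
    calc (1:ℝ) + a*b ≤ |1 + a*b| := le_abs_self _
    _ = Real.sqrt ((1+a*b)^2) := by rw [Real.sqrt_sq_eq_abs]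
    _ ≤ Real.sqrt ((1+a^2)*(1+b^2)) := by
        apply Real.sqrt_le_sqrt; nlinarith [sq_nonneg (a-b)]
  have h2 : Real.sqrt (1+(a+b)^2) ≤ Real.sqrt ((Real.sqrt (1+a^2) + Real.sqrt (1+b^2))^2) := by
    apply Real.sqrt_le_sqrt; nlinarith
  calc Real.sqrt (1+(a+b)^2) ≤ _ := h2
  _ = _ := Real.sqrt_sq (by positivity)

lemma sqrtW_tri' (k k₁ : ℤ) : Real.sqrt (W k) ≤ Real.sqrt (W k₁) + Real.sqrt (W (k - k₁)) := by
  have := sqrtW_tri (k₁ : ℝ) ((k - k₁ : ℤ) : ℝ)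
  unfold W
  convert this using 4 <;> push_cast <;> ring

-- region A geometry
lemma regionA (k k₁ : ℤ) (h : 4 * W (k - k₁) ≤ W k₁) :
    W k₁ ≤ 4 * W k ∧ W k ≤ 4 * W k₁ := by
  set sk := Real.sqrt (W k)
  set sk1 := Real.sqrt (W k₁)
  set sj := Real.sqrt (W (k - k₁))
  have hsk : sk^2 = W k := Real.sq_sqrt (W_pos k).le
  have hsk1 : sk1^2 = W k₁ := Real.sq_sqrt (W_pos k₁).le
  have hsj : sj^2 = W (k - k₁) := Real.sq_sqrt (W_pos _).le
  have h0k : 0 ≤ sk := Real.sqrt_nonneg _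
  have h0k1 : 0 ≤ sk1 := Real.sqrt_nonneg _
  have h0j : 0 ≤ sj := Real.sqrt_nonneg _
  have tri1 : sk ≤ sk1 + sj := sqrtW_tri' k k₁
  have tri2 : sk1 ≤ sk + sj := by
    have := sqrtW_tri' k₁ k
    have hWsymm : W (k₁ - k) = W (k - k₁) := by
      unfold W; push_cast; ring_nf
    rwa [hWsymm] at this
  have hhalf : 2 * sj ≤ sk1 := by
    nlinarith [sq_nonneg (2*sj - sk1)]
  constructor
  · nlinarith
  · nlinarith

lemma regionB (k j : ℤ) (h : W (k - j) ≤ 4 * W j) : W k ≤ 9 * W j := by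
  set sk := Real.sqrt (W k)
  set sk1 := Real.sqrt (W (k - j))
  set sj := Real.sqrt (W j)
  have hsk : sk^2 = W k := Real.sq_sqrt (W_pos k).le
  have hsk1 : sk1^2 = W (k - j) := Real.sq_sqrt (W_pos _).le
  have hsj : sj^2 = W j := Real.sq_sqrt (W_pos _).le
  have h0k : 0 ≤ sk := Real.sqrt_nonneg _
  have h0k1 : 0 ≤ sk1 := Real.sqrt_nonneg _
  have h0j : 0 ≤ sj := Real.sqrt_nonneg _
  have tri1 : sk ≤ sj + sk1 := sqrtW_tri' k j
  have hhalf : sk1 ≤ 2 * sj := by nlinarith [sq_nonneg (sk1 - 2*sj)]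
  nlinarith

-- ratio bound, region A
lemma ratioA {x y t : ℝ} (hx : 1 ≤ x) (hy : 1 ≤ y) (h1 : x ≤ 4*y) (h2 : y ≤ 4*x) :
    x ^ t * y ^ (-t) ≤ 4 ^ |t| := by
  have hx0 : (0:ℝ) < x := lt_of_lt_of_le one_pos hx
  have hy0 : (0:ℝ) < y := lt_of_lt_of_le one_pos hy
  have key : x ^ t * y ^ (-t) = (x / y) ^ t := by
    rw [Real.div_rpow hx0.le hy0.le, Real.rpow_neg hy0.le, div_eq_mul_inv]
  rw [key]
  rcases le_total 0 t with ht | ht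
  · rw [_root_.abs_of_nonneg ht]
    exact Real.rpow_le_rpow (by positivity) (by rw [div_le_iff₀ hy0]; linarith) ht
  · rw [_root_.abs_of_nonpos ht]
    have h4 : (4:ℝ)⁻¹ ≤ x / y := by
      rw [le_div_iff₀ hy0]; linarith
    calc (x/y) ^ t ≤ ((4:ℝ)⁻¹) ^ t := Real.rpow_le_rpow_of_nonpos (by positivity) h4 ht
    _ = 4 ^ (-t) := by rw [← Real.rpow_neg_one, ← Real.rpow_mul (by norm_num)]; ring_nf

-- pointwise bound region B
lemma rpow_div_nine {x t : ℝ} (hx : 0 < x) : (x/9) ^ t = 9^(-t) * x ^ t := by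
  rw [Real.div_rpow hx.le (by norm_num), Real.rpow_neg (by norm_num : (0:ℝ) ≤ 9)]
  field_simp

lemma ratioB {r x y z : ℝ} (hr : 1/2 < r) (hx : 1 ≤ x) (hy : 1 ≤ y) (hz : 1 ≤ z)
    (h1 : y ≤ 4*z) (h2 : x ≤ 9*z) :
    x ^ (r-1) * y ^ (1-r) * z ^ (-r) ≤ (4 * 9 ^ r) * x ^ (-(min r 1)) := by
  have hx0 : (0:ℝ) < x := by linarith
  have hy0 : (0:ℝ) < y := by linarith
  have hz0 : (0:ℝ) < z := by linarith
  have hx9 : x / 9 ≤ z := by linarith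
  have hx90 : (0:ℝ) < x / 9 := by positivity
  rcases le_total r 1 with hr1 | hr1
  · rw [min_eq_left hr1]
    have hy' : y ^ (1-r) ≤ 4 ^ (1-r) * z ^ (1-r) := by
      calc y ^ (1-r) ≤ (4*z) ^ (1-r) := Real.rpow_le_rpow hy0.le h1 (by linarith)
      _ = 4 ^ (1-r) * z ^ (1-r) := Real.mul_rpow (by norm_num) hz0.le
    have hz' : z ^ (1-r) * z ^ (-r) = z ^ (1-2*r) := by
      rw [← Real.rpow_add hz0]; ring_nf
    have hz'' : z ^ (1-2*r) ≤ 9^(2*r-1) * x ^ (1-2*r) := by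
      calc z ^ (1-2*r) ≤ (x/9) ^ (1-2*r) :=
            Real.rpow_le_rpow_of_nonpos hx90 hx9 (by linarith)
      _ = 9^(-(1-2*r)) * x ^ (1-2*r) := rpow_div_nine hx0
      _ = 9^(2*r-1) * x ^ (1-2*r) := by ring_nf
    have h41 : (4:ℝ) ^ (1-r) ≤ 4 := by
      calc (4:ℝ) ^ (1-r) ≤ 4 ^ (1:ℝ) := Real.rpow_le_rpow_of_exponent_le (by norm_num) (by linarith)
      _ = 4 := Real.rpow_one 4
    have h92 : (9:ℝ) ^ (2*r-1) ≤ 9 ^ r := Real.rpow_le_rpow_of_exponent_le (by norm_num) (by linarith)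
    have hxa : x ^ (r-1) * x ^ (1-2*r) = x ^ (-r) := by
      rw [← Real.rpow_add hx0]; ring_nf
    calc x ^ (r-1) * y ^ (1-r) * z ^ (-r)
        ≤ x ^ (r-1) * (4 ^ (1-r) * z ^ (1-r)) * z ^ (-r) := by gcongr
    _ = 4 ^ (1-r) * (x ^ (r-1) * (z ^ (1-r) * z ^ (-r))) := by ring
    _ = 4 ^ (1-r) * (x ^ (r-1) * z ^ (1-2*r)) := by rw [hz']
    _ ≤ 4 ^ (1-r) * (x ^ (r-1) * (9^(2*r-1) * x ^ (1-2*r))) := by gcongr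
    _ = 4 ^ (1-r) * 9^(2*r-1) * (x ^ (r-1) * x ^ (1-2*r)) := by ring
    _ = 4 ^ (1-r) * 9^(2*r-1) * x ^ (-r) := by rw [hxa]
    _ ≤ 4 * 9^r * x ^ (-r) := by gcongr <;> positivity
  · rw [min_eq_right hr1]
    have hy' : y ^ (1-r) ≤ 1 := Real.rpow_le_one_of_one_le_of_nonpos hy (by linarith)
    have hz' : z ^ (-r) ≤ 9^r * x ^ (-r) := by
      calc z ^ (-r) ≤ (x/9) ^ (-r) := Real.rpow_le_rpow_of_nonpos hx90 hx9 (by linarith)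
      _ = 9^(-(-r)) * x ^ (-r) := rpow_div_nine hx0
      _ = 9^r * x ^ (-r) := by ring_nf
    have hxa : x ^ (r-1) * x ^ (-r) = x ^ (-(1:ℝ)) := by
      rw [← Real.rpow_add hx0]; ring_nf
    calc x ^ (r-1) * y ^ (1-r) * z ^ (-r) ≤ x ^ (r-1) * 1 * z ^ (-r) := by gcongr
    _ = x ^ (r-1) * z ^ (-r) := by ring
    _ ≤ x ^ (r-1) * (9^r * x ^ (-r)) := by gcongr
    _ = 9^r * (x ^ (r-1) * x ^ (-r)) := by ring
    _ = 9^r * x ^ (-(1:ℝ)) := by rw [hxa]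
    _ ≤ (4 * 9^r) * x ^ (-(1:ℝ)) := by
        have : (0:ℝ) ≤ 9^r := Real.rpow_nonneg (by norm_num) _
        have : (0:ℝ) ≤ x ^ (-(1:ℝ)) := Real.rpow_nonneg hx0.le _
        nlinarith

lemma sumW (e : ℝ) (he : 1/2 < e) : Summable (fun k : ℤ => (W k) ^ (-e)) := by
  have h1 : Summable (fun k : ℤ => |(k:ℝ)| ^ (-(2*e))) := Real.summable_abs_int_rpow (by linarith)
  have h2 : Summable (fun k : ℤ => if k = 0 then (1:ℝ) else 0) := by
    apply summable_of_ne_finset_zero (s := {0}); intro k hk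
    simp at hk; simp [hk]
  refine Summable.of_nonneg_of_le (fun k => Real.rpow_nonneg (W_pos k).le _) (fun k => ?_) (h1.add h2)
  by_cases hk : k = 0
  · simp [hk, W]
    exact Real.rpow_nonneg le_rfl _
  · have hk1 : (1:ℝ) ≤ |(k:ℝ)| := by
      rw [← Int.cast_abs]
      exact_mod_cast Int.one_le_abs (by omega)
    have : (W k) ^ (-e) ≤ (|(k:ℝ)|^2) ^ (-e) := by
      apply Real.rpow_le_rpow_of_nonpos (by positivity) _ (by linarith)
      rw [_root_.sq_abs]; unfold W; linarith
    simp only [hk, if_false, add_zero]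
    refine this.trans_eq ?_
    rw [← Real.rpow_natCast |(k:ℝ)| 2, ← Real.rpow_mul (abs_nonneg _)]
    norm_num

lemma SRfin (e : ℝ) (he : 1/2 < e) : (∑' k : ℤ, owr (-e) k) ≠ ⊤ := by
  have : ∑' k : ℤ, owr (-e) k = ENNReal.ofReal (∑' k : ℤ, (W k)^(-e)) := by
    rw [ENNReal.ofReal_tsum_of_nonneg (fun k => Real.rpow_nonneg (W_pos k).le _) (sumW e he)]
    rfl
  rw [this]; exact ENNReal.ofReal_ne_top

/-- the kernel -/
def Gk (r : ℝ) (k k₁ : ℤ) : ℝ≥0∞ :=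
  owr ((r-1)/2) k * owr ((1-r)/2) k₁ * owr (-(r/2)) (k-k₁)

lemma Gk_sq (r : ℝ) (k k₁ : ℤ) :
    (Gk r k k₁)^2 = owr (r-1) k * owr (1-r) k₁ * owr (-r) (k-k₁) := by
  unfold Gk
  rw [mul_pow, mul_pow, owr_sq, owr_sq, owr_sq]
  congr 1
  · congr 1 <;> · congr 1; ring
  · congr 1; ring

lemma owr_prod_le_ofReal {c : ℝ} (e e' : ℝ) (k k' : ℤ)
    (h : (W k) ^ e * (W k') ^ e' ≤ c) : owr e k * owr e' k' ≤ ENNReal.ofReal c := by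
  unfold owr
  rw [← ENNReal.ofReal_mul (Real.rpow_nonneg (W_pos k).le _)]
  exact ENNReal.ofReal_le_ofReal h

lemma sliceA (r : ℝ) (hr : 1/2 < r) (k₁ : ℤ) :
    (∑' k : ℤ, (if 4 * W (k - k₁) ≤ W k₁ then Gk r k k₁ else 0)^2)
      ≤ ENNReal.ofReal (4 ^ |r-1|) * ∑' j : ℤ, owr (-r) j := by
  have hpt : ∀ k : ℤ, (if 4 * W (k - k₁) ≤ W k₁ then Gk r k k₁ else 0)^2
      ≤ ENNReal.ofReal (4 ^ |r-1|) * owr (-r) (k - k₁) := by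
    intro k
    by_cases h : 4 * W (k - k₁) ≤ W k₁
    · rw [if_pos h, Gk_sq]
      obtain ⟨hA1, hA2⟩ := regionA k k₁ h
      have hb : owr (r-1) k * owr (1-r) k₁ ≤ ENNReal.ofReal (4 ^ |r-1|) := by
        apply owr_prod_le_ofReal
        have := ratioA (one_le_W k) (one_le_W k₁) hA2 hA1 (t := r-1)
        rwa [show -(r-1) = 1-r by ring] at this
      exact mul_le_mul' hb le_rfl
    · rw [if_neg h]
      simp
  calc (∑' k : ℤ, (if 4 * W (k - k₁) ≤ W k₁ then Gk r k k₁ else 0)^2)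
      ≤ ∑' k : ℤ, ENNReal.ofReal (4 ^ |r-1|) * owr (-r) (k - k₁) := ENNReal.tsum_le_tsum hpt
  _ = ENNReal.ofReal (4 ^ |r-1|) * ∑' k : ℤ, owr (-r) (k - k₁) := ENNReal.tsum_mul_left
  _ = ENNReal.ofReal (4 ^ |r-1|) * ∑' j : ℤ, owr (-r) j := by
      congr 1
      exact (Equiv.subRight k₁).tsum_eq (fun j => owr (-r) j)

lemma sliceB (r : ℝ) (hr : 1/2 < r) (j : ℤ) :
    (∑' k : ℤ, (if 4 * W j ≤ W (k - j) then 0 else Gk r k (k-j))^2)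
      ≤ ENNReal.ofReal (4 * 9 ^ r) * ∑' k : ℤ, owr (-(min r 1)) k := by
  have hpt : ∀ k : ℤ, (if 4 * W j ≤ W (k - j) then 0 else Gk r k (k-j))^2
      ≤ ENNReal.ofReal (4 * 9 ^ r) * owr (-(min r 1)) k := by
    intro k
    by_cases h : 4 * W j ≤ W (k - j)
    · rw [if_pos h]; simp
    · rw [if_neg h, Gk_sq]
      push_neg at h
      have h4 : W (k - j) ≤ 4 * W j := h.le
      have h9 : W k ≤ 9 * W j := regionB k j h4
      have key := ratioB hr (one_le_W k) (one_le_W (k-j)) (one_le_W j) h4 h9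
      have hkj : k - (k - j) = j := by ring
      rw [hkj]
      calc owr (r-1) k * owr (1-r) (k-j) * owr (-r) j
          = ENNReal.ofReal ((W k)^(r-1) * (W (k-j))^(1-r) * (W j)^(-r)) := by
            unfold owr
            rw [← ENNReal.ofReal_mul (Real.rpow_nonneg (W_pos k).le _),
              ← ENNReal.ofReal_mul (mul_nonneg (Real.rpow_nonneg (W_pos k).le _)
                (Real.rpow_nonneg (W_pos (k-j)).le _))]
      _ ≤ ENNReal.ofReal ((4 * 9 ^ r) * (W k) ^ (-(min r 1))) := ENNReal.ofReal_le_ofReal key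
      _ = ENNReal.ofReal (4 * 9 ^ r) * owr (-(min r 1)) k := by
            unfold owr
            rw [← ENNReal.ofReal_mul (by positivity)]
  calc (∑' k : ℤ, (if 4 * W j ≤ W (k - j) then 0 else Gk r k (k-j))^2)
      ≤ ∑' k : ℤ, ENNReal.ofReal (4 * 9 ^ r) * owr (-(min r 1)) k := ENNReal.tsum_le_tsum hpt
  _ = ENNReal.ofReal (4 * 9 ^ r) * ∑' k : ℤ, owr (-(min r 1)) k := ENNReal.tsum_mul_left

-- === from t2 ===


lemma finset_cs_aux {ι : Type*} (s : Finset ι) (x y : ι → ℝ≥0∞) (i0 : ι) (hi0 : i0 ∈ s)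
    (htop : x i0 = ⊤) :
    (∑ i ∈ s, x i * y i)^2 ≤ (∑ i ∈ s, (x i)^2) * (∑ i ∈ s, (y i)^2) := by
  by_cases hy : ∀ i ∈ s, y i = 0
  · have : ∑ i ∈ s, x i * y i = 0 := Finset.sum_eq_zero fun i hi => by rw [hy i hi, mul_zero]
    simp [this]
  · push_neg at hy
    obtain ⟨j0, hj0, hyj⟩ := hy
    have h1 : (∑ i ∈ s, (x i)^2) = ⊤ := by
      refine eq_top_iff.2 (le_trans ?_ (Finset.single_le_sum (f := fun i => (x i)^2)
        (fun i _ => by positivity) hi0))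
      simp [htop]
    have h2 : (∑ i ∈ s, (y i)^2) ≠ 0 := by
      intro h
      exact hyj (pow_eq_zero_iff (n := 2) (by norm_num) |>.1
        ((Finset.sum_eq_zero_iff.1 h) j0 hj0))
    rw [h1, ENNReal.top_mul h2]
    exact le_top

lemma finset_cs {ι : Type*} (s : Finset ι) (x y : ι → ℝ≥0∞) :
    (∑ i ∈ s, x i * y i)^2 ≤ (∑ i ∈ s, (x i)^2) * (∑ i ∈ s, (y i)^2) := by
  by_cases hx : ∃ i ∈ s, x i = ⊤
  · obtain ⟨i0, h1, h2⟩ := hx; exact finset_cs_aux s x y i0 h1 h2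
  by_cases hy : ∃ i ∈ s, y i = ⊤
  · obtain ⟨i0, h1, h2⟩ := hy
    calc (∑ i ∈ s, x i * y i)^2 = (∑ i ∈ s, y i * x i)^2 := by simp [mul_comm]
    _ ≤ (∑ i ∈ s, (y i)^2) * (∑ i ∈ s, (x i)^2) := finset_cs_aux s y x i0 h1 h2
    _ = _ := mul_comm _ _
  push_neg at hx hy
  -- all finite; move to NNReal
  have ex : ∀ i ∈ s, x i = ((x i).toNNReal : ℝ≥0∞) := fun i hi => (coe_toNNReal (hx i hi)).symm
  have ey : ∀ i ∈ s, y i = ((y i).toNNReal : ℝ≥0∞) := fun i hi => (coe_toNNReal (hy i hi)).symm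
  have key := Finset.sum_mul_sq_le_sq_mul_sq s (fun i => (x i).toNNReal) (fun i => (y i).toNNReal)
  have e1 : ∑ i ∈ s, x i * y i = ((∑ i ∈ s, (x i).toNNReal * (y i).toNNReal : ℝ≥0) : ℝ≥0∞) := by
    rw [ENNReal.coe_finset_sum]
    exact Finset.sum_congr rfl fun i hi => by rw [ex i hi, ey i hi]; simp
  have e2 : ∑ i ∈ s, (x i)^2 = ((∑ i ∈ s, ((x i).toNNReal)^2 : ℝ≥0) : ℝ≥0∞) := by
    rw [ENNReal.coe_finset_sum]
    exact Finset.sum_congr rfl fun i hi => by rw [ex i hi]; simp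
  have e3 : ∑ i ∈ s, (y i)^2 = ((∑ i ∈ s, ((y i).toNNReal)^2 : ℝ≥0) : ℝ≥0∞) := by
    rw [ENNReal.coe_finset_sum]
    exact Finset.sum_congr rfl fun i hi => by rw [ey i hi]; simp
  rw [e1, e2, e3]
  calc (((∑ i ∈ s, (x i).toNNReal * (y i).toNNReal : ℝ≥0) : ℝ≥0∞))^2
      = (((∑ i ∈ s, (x i).toNNReal * (y i).toNNReal)^2 : ℝ≥0) : ℝ≥0∞) := by push_cast; ring
  _ ≤ _ := by
      rw [← ENNReal.coe_mul]
      exact_mod_cast key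

lemma tsum_cs {ι : Type*} [DecidableEq ι] (x y : ι → ℝ≥0∞) :
    (∑' i, x i * y i)^2 ≤ (∑' i, (x i)^2) * (∑' i, (y i)^2) := by
  rw [ENNReal.tsum_eq_iSup_sum (f := fun i => x i * y i)]
  rw [sq, ENNReal.iSup_mul]
  refine iSup_le fun s => ?_
  rw [ENNReal.mul_iSup]
  refine iSup_le fun t => ?_
  calc (∑ i ∈ s, x i * y i) * (∑ i ∈ t, x i * y i)
      ≤ (∑ i ∈ s ∪ t, x i * y i) * (∑ i ∈ s ∪ t, x i * y i) := by
        gcongr <;> first | exact Finset.subset_union_left | exact Finset.subset_union_right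
  _ = (∑ i ∈ s ∪ t, x i * y i)^2 := (sq _).symm
  _ ≤ (∑ i ∈ s ∪ t, (x i)^2) * (∑ i ∈ s ∪ t, (y i)^2) := finset_cs _ x y
  _ ≤ _ := by gcongr <;> exact ENNReal.sum_le_tsum _

lemma sq3 (a b : ℝ≥0∞) : (a+b)^2 ≤ 3*a^2 + 3*b^2 := by
  have hab : a*b ≤ a^2 + b^2 := by
    rcases le_total a b with h | h
    · calc a*b ≤ b*b := mul_le_mul' h le_rfl
      _ = b^2 := (sq b).symm
      _ ≤ a^2 + b^2 := le_add_self
    · calc a*b ≤ a*a := mul_le_mul' le_rfl h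
      _ = a^2 := (sq a).symm
      _ ≤ a^2 + b^2 := le_self_add
  calc (a+b)^2 = a^2 + b^2 + 2*(a*b) := by ring
  _ ≤ a^2 + b^2 + 2*(a^2+b^2) := by gcongr
  _ = 3*a^2 + 3*b^2 := by ring

lemma core (r : ℝ) (hr : 1/2 < r) : ∃ C : ℝ≥0∞, C ≠ ⊤ ∧ ∀ A B : ℤ → ℝ≥0∞,
    ∑' k : ℤ, (owr ((r-1)/2) k * ∑' k₁ : ℤ, owr (1/2) k₁ * A k₁ * B (k - k₁))^2
      ≤ C * (∑' k : ℤ, (owr (r/2) k * A k)^2) * (∑' k : ℤ, (owr (r/2) k * B k)^2) := by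
  set CA : ℝ≥0∞ := ENNReal.ofReal (4 ^ |r-1|) * ∑' j : ℤ, owr (-r) j with hCA
  set CB : ℝ≥0∞ := ENNReal.ofReal (4 * 9 ^ r) * ∑' k : ℤ, owr (-(min r 1)) k with hCB
  have hCAfin : CA ≠ ⊤ := ENNReal.mul_ne_top ENNReal.ofReal_ne_top (SRfin r hr)
  have hCBfin : CB ≠ ⊤ := ENNReal.mul_ne_top ENNReal.ofReal_ne_top
    (SRfin (min r 1) (by rcases le_total r 1 with h|h; · rw [min_eq_left h]; exact hr
                         · rw [min_eq_right h]; linarith))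
  refine ⟨3*CA + 3*CB, ENNReal.add_ne_top.mpr ⟨ENNReal.mul_ne_top ENNReal.ofNat_ne_top hCAfin, ENNReal.mul_ne_top ENNReal.ofNat_ne_top hCBfin⟩, ?_⟩
  intro A B
  set α : ℤ → ℝ≥0∞ := fun k => owr (r/2) k * A k with hα
  set β : ℤ → ℝ≥0∞ := fun k => owr (r/2) k * B k with hβ
  set Sa := ∑' k : ℤ, (α k)^2 with hSa
  set Sb := ∑' k : ℤ, (β k)^2 with hSb
  set GA : ℤ → ℤ → ℝ≥0∞ := fun k k₁ => if 4 * W (k - k₁) ≤ W k₁ then Gk r k k₁ else 0 with hGA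
  set GB : ℤ → ℤ → ℝ≥0∞ := fun k k₁ => if 4 * W (k - k₁) ≤ W k₁ then 0 else Gk r k k₁ with hGB
  -- pointwise identity
  have key : ∀ k k₁ : ℤ, owr ((r-1)/2) k * (owr (1/2) k₁ * A k₁ * B (k - k₁))
      = Gk r k k₁ * α k₁ * β (k - k₁) := by
    intro k k₁
    symm
    have e1 : owr ((1-r)/2) k₁ * owr (r/2) k₁ = owr (1/2) k₁ := by
      rw [owr_mul]; congr 1; ring
    have e2 : owr (-(r/2)) (k-k₁) * owr (r/2) (k-k₁) = 1 := by
      rw [owr_mul]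
      rw [show -(r/2) + r/2 = 0 by ring, owr_zero]
    calc Gk r k k₁ * α k₁ * β (k - k₁)
        = owr ((r-1)/2) k * ((owr ((1-r)/2) k₁ * owr (r/2) k₁) * A k₁ *
            ((owr (-(r/2)) (k-k₁) * owr (r/2) (k-k₁)) * B (k-k₁))) := by
          simp only [hα, hβ, Gk]; ring
    _ = owr ((r-1)/2) k * (owr (1/2) k₁ * A k₁ * (1 * B (k-k₁))) := by rw [e1, e2]
    _ = owr ((r-1)/2) k * (owr (1/2) k₁ * A k₁ * B (k-k₁)) := by rw [one_mul]
  -- rewrite LHS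
  have hL : ∀ k : ℤ, owr ((r-1)/2) k * (∑' k₁ : ℤ, owr (1/2) k₁ * A k₁ * B (k - k₁))
      = (∑' k₁ : ℤ, GA k k₁ * α k₁ * β (k - k₁)) + (∑' k₁ : ℤ, GB k k₁ * α k₁ * β (k - k₁)) := by
    intro k
    rw [← ENNReal.tsum_mul_left]
    rw [tsum_congr (fun k₁ => key k k₁)]
    rw [← ENNReal.tsum_add]
    refine tsum_congr fun k₁ => ?_
    simp only [hGA, hGB]
    by_cases h : 4 * W (k - k₁) ≤ W k₁
    · rw [if_pos h, if_pos h, zero_mul, zero_mul, add_zero]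
    · rw [if_neg h, if_neg h, zero_mul, zero_mul, zero_add]
  -- region A estimate
  have hA : ∑' k : ℤ, (∑' k₁ : ℤ, GA k k₁ * α k₁ * β (k - k₁))^2 ≤ CA * Sa * Sb := by
    have step1 : ∀ k : ℤ, (∑' k₁ : ℤ, GA k k₁ * α k₁ * β (k - k₁))^2
        ≤ (∑' k₁ : ℤ, (GA k k₁)^2 * (α k₁)^2) * Sb := by
      intro k
      have hcs := tsum_cs (fun k₁ => GA k k₁ * α k₁) (fun k₁ => β (k - k₁))
      have hre : (∑' k₁ : ℤ, (β (k - k₁))^2) = Sb := by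
        rw [hSb]
        exact (Equiv.subLeft k).tsum_eq (fun j => (β j)^2)
      calc (∑' k₁ : ℤ, GA k k₁ * α k₁ * β (k - k₁))^2
          ≤ (∑' k₁ : ℤ, (GA k k₁ * α k₁)^2) * (∑' k₁ : ℤ, (β (k - k₁))^2) := hcs
      _ = (∑' k₁ : ℤ, (GA k k₁)^2 * (α k₁)^2) * Sb := by
          rw [hre]; congr 1; exact tsum_congr fun k₁ => mul_pow _ _ _
    calc ∑' k : ℤ, (∑' k₁ : ℤ, GA k k₁ * α k₁ * β (k - k₁))^2
        ≤ ∑' k : ℤ, (∑' k₁ : ℤ, (GA k k₁)^2 * (α k₁)^2) * Sb := ENNReal.tsum_le_tsum step1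
    _ = (∑' k : ℤ, ∑' k₁ : ℤ, (GA k k₁)^2 * (α k₁)^2) * Sb := ENNReal.tsum_mul_right
    _ = (∑' k₁ : ℤ, ∑' k : ℤ, (GA k k₁)^2 * (α k₁)^2) * Sb := by rw [ENNReal.tsum_comm]
    _ = (∑' k₁ : ℤ, (∑' k : ℤ, (GA k k₁)^2) * (α k₁)^2) * Sb := by
        congr 1; exact tsum_congr fun k₁ => ENNReal.tsum_mul_right
    _ ≤ (∑' k₁ : ℤ, CA * (α k₁)^2) * Sb := by
        gcongr with k₁
        exact sliceA r hr k₁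
    _ = CA * Sa * Sb := by rw [ENNReal.tsum_mul_left, hSa]
  -- region B estimate
  have hB : ∑' k : ℤ, (∑' k₁ : ℤ, GB k k₁ * α k₁ * β (k - k₁))^2 ≤ CB * Sa * Sb := by
    have step1 : ∀ k : ℤ, (∑' k₁ : ℤ, GB k k₁ * α k₁ * β (k - k₁))^2
        ≤ Sa * (∑' j : ℤ, (GB k (k - j))^2 * (β j)^2) := by
      intro k
      have hcs := tsum_cs (fun k₁ => α k₁) (fun k₁ => GB k k₁ * β (k - k₁))
      have hre : (∑' k₁ : ℤ, (GB k k₁ * β (k - k₁))^2) = ∑' j : ℤ, (GB k (k - j))^2 * (β j)^2 := by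
        rw [← (Equiv.subLeft k).tsum_eq (fun k₁ => (GB k k₁ * β (k - k₁))^2)]
        refine tsum_congr fun j => ?_
        simp only [Equiv.subLeft_apply, _root_.sub_sub_cancel]
        rw [mul_pow]
      calc (∑' k₁ : ℤ, GB k k₁ * α k₁ * β (k - k₁))^2
          = (∑' k₁ : ℤ, α k₁ * (GB k k₁ * β (k - k₁)))^2 := by
            congr 1; exact tsum_congr fun k₁ => by ring
      _ ≤ (∑' k₁ : ℤ, (α k₁)^2) * (∑' k₁ : ℤ, (GB k k₁ * β (k - k₁))^2) := tsum_cs _ _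
      _ = Sa * (∑' j : ℤ, (GB k (k - j))^2 * (β j)^2) := by rw [hre, hSa]
    calc ∑' k : ℤ, (∑' k₁ : ℤ, GB k k₁ * α k₁ * β (k - k₁))^2
        ≤ ∑' k : ℤ, Sa * (∑' j : ℤ, (GB k (k - j))^2 * (β j)^2) := ENNReal.tsum_le_tsum step1
    _ = Sa * ∑' k : ℤ, ∑' j : ℤ, (GB k (k - j))^2 * (β j)^2 := ENNReal.tsum_mul_left
    _ = Sa * ∑' j : ℤ, ∑' k : ℤ, (GB k (k - j))^2 * (β j)^2 := by rw [ENNReal.tsum_comm]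
    _ = Sa * ∑' j : ℤ, (∑' k : ℤ, (GB k (k - j))^2) * (β j)^2 := by
        congr 1; exact tsum_congr fun j => ENNReal.tsum_mul_right
    _ ≤ Sa * ∑' j : ℤ, CB * (β j)^2 := by
        gcongr with j
        have hrw : (∑' k : ℤ, (GB k (k - j))^2)
            = ∑' k : ℤ, (if 4 * W j ≤ W (k - j) then 0 else Gk r k (k-j))^2 :=
          tsum_congr fun k => by simp only [hGB, _root_.sub_sub_cancel]
        rw [hrw, hCB]
        exact sliceB r hr j
    _ = Sa * (CB * Sb) := by rw [ENNReal.tsum_mul_left, hSb]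
    _ = CB * Sa * Sb := by ring
  -- combine
  calc ∑' k : ℤ, (owr ((r-1)/2) k * ∑' k₁ : ℤ, owr (1/2) k₁ * A k₁ * B (k - k₁))^2
      = ∑' k : ℤ, ((∑' k₁ : ℤ, GA k k₁ * α k₁ * β (k - k₁))
          + (∑' k₁ : ℤ, GB k k₁ * α k₁ * β (k - k₁)))^2 := by
        exact tsum_congr fun k => by rw [hL k]
  _ ≤ ∑' k : ℤ, (3*(∑' k₁ : ℤ, GA k k₁ * α k₁ * β (k - k₁))^2
          + 3*(∑' k₁ : ℤ, GB k k₁ * α k₁ * β (k - k₁))^2) := ENNReal.tsum_le_tsum (fun k => sq3 _ _)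
  _ = 3*(∑' k : ℤ, (∑' k₁ : ℤ, GA k k₁ * α k₁ * β (k - k₁))^2)
        + 3*(∑' k : ℤ, (∑' k₁ : ℤ, GB k k₁ * α k₁ * β (k - k₁))^2) := by
      rw [ENNReal.tsum_add, ENNReal.tsum_mul_left, ENNReal.tsum_mul_left]
  _ ≤ 3*(CA * Sa * Sb) + 3*(CB * Sa * Sb) := by gcongr
  _ = (3*CA + 3*CB) * Sa * Sb := by ring



lemma norm_fourier_eq (n : ℤ) (x : 𝕋) : ‖(fourier n x : ℂ)‖ = 1 := by
  rw [fourier_apply]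
  exact Circle.norm_coe _

lemma integral_fourier_ne (n : ℤ) (hn : n ≠ 0) :
    ∫ x : 𝕋, fourier n x ∂haarAddCircle = 0 :=
  integral_eq_zero_of_add_right_eq_neg (μ := haarAddCircle)
    (fourier_add_half_inv_index hn (by positivity))

lemma fourierCoeff_fourier'' (m k : ℤ) :
    fourierCoeff (fun x : 𝕋 => fourier m x) k = if m = k then 1 else 0 := by
  rw [fourierCoeff]
  have : ∀ x : 𝕋, fourier (-k) x • fourier m x = fourier (-k + m) x := by
    intro x; rw [fourier_add]; rw [smul_eq_mul]
  rw [integral_congr_ae (Filter.Eventually.of_forall this)]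
  by_cases h : m = k
  · subst h
    simp only [neg_add_cancel]
    have : ∀ x : 𝕋, fourier (0:ℤ) x = (1:ℂ) := fun x => fourier_zero
    rw [integral_congr_ae (Filter.Eventually.of_forall this)]
    simp [measure_univ]
  · rw [integral_fourier_ne _ (by omega), if_neg h]

lemma summable_enn_of_norm {c : ℤ → ℂ} (hc : Summable fun k => ‖c k‖) :
    ∑' k, (‖c k‖₊ : ℝ≥0∞) ≠ ⊤ := by
  have : ∑' k, (‖c k‖₊ : ℝ≥0∞) = ENNReal.ofReal (∑' k, ‖c k‖) := by
    rw [ENNReal.ofReal_tsum_of_nonneg (fun k => norm_nonneg _) hc]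
    exact tsum_congr fun k => (ofReal_norm (c k)).symm
  rw [this]; exact ENNReal.ofReal_ne_top

lemma fc_tsum (c : ℤ → ℂ) (hc : Summable fun k => ‖c k‖) (k : ℤ) :
    fourierCoeff (fun x : 𝕋 => ∑' k₁, c k₁ * fourier k₁ x) k = c k := by
  rw [fourierCoeff]
  have h1 : ∀ x : 𝕋, fourier (-k) x • ∑' k₁, c k₁ * fourier k₁ x
      = ∑' k₁, fourier (-k) x * (c k₁ * fourier k₁ x) := by
    intro x; rw [smul_eq_mul]; exact (_root_.tsum_mul_left).symm
  rw [integral_congr_ae (Filter.Eventually.of_forall h1)]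
  rw [integral_tsum]
  · have h2 : ∀ k₁, ∫ x : 𝕋, fourier (-k) x * (c k₁ * fourier k₁ x) ∂haarAddCircle
        = c k₁ * (if k₁ = k then 1 else 0) := by
      intro k₁
      have : ∀ x : 𝕋, fourier (-k) x * (c k₁ * fourier k₁ x)
          = c k₁ * (fourier (-k) x • fourier k₁ x) := fun x => by rw [smul_eq_mul]; ring
      rw [integral_congr_ae (Filter.Eventually.of_forall this)]
      rw [show (fun a : 𝕋 => c k₁ * ((fourier (-k)) a • (fourier k₁) a))
          = (fun a : 𝕋 => c k₁ • ((fourier (-k)) a • (fourier k₁) a)) from rfl]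
      rw [integral_smul, smul_eq_mul, ← fourierCoeff, fourierCoeff_fourier'']
    rw [tsum_congr h2, tsum_eq_single k (fun b hb => by rw [if_neg hb, mul_zero])]
    simp
  · intro k₁
    exact (Continuous.mul (fourier (-k)).continuous
      ((continuous_const).mul (fourier k₁).continuous)).aestronglyMeasurable
  · have heq : ∀ k₁, ∫⁻ x : 𝕋, ‖fourier (-k) x * (c k₁ * fourier k₁ x)‖₊ ∂haarAddCircle
        = (‖c k₁‖₊ : ℝ≥0∞) := by
      intro k₁
      have : ∀ x : 𝕋, (‖fourier (-k) x * (c k₁ * fourier k₁ x)‖₊ : ℝ≥0∞) = (‖c k₁‖₊ : ℝ≥0∞) := by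
        intro x
        congr 1
        ext
        simp [norm_fourier_eq, Circle.norm_coe]
      rw [lintegral_congr this, lintegral_const, measure_univ, mul_one]
    exact ne_of_eq_of_ne (tsum_congr heq) (summable_enn_of_norm hc)



lemma norm_fourier_eq' (n : ℤ) (x : 𝕋) : ‖(fourier n x : ℂ)‖ = 1 := by
  rw [fourier_apply]; exact Circle.norm_coe _

lemma summable_enn_of_norm' {c : ℤ → ℂ} (hc : Summable fun k => ‖c k‖) :
    ∑' k, (‖c k‖₊ : ℝ≥0∞) ≠ ⊤ := by
  have : ∑' k, (‖c k‖₊ : ℝ≥0∞) = ENNReal.ofReal (∑' k, ‖c k‖) := by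
    rw [ENNReal.ofReal_tsum_of_nonneg (fun k => norm_nonneg _) hc]
    exact tsum_congr fun k => (ofReal_norm (c k)).symm
  rw [this]; exact ENNReal.ofReal_ne_top

lemma fc_norm_le (g : 𝕋 → ℂ) (k : ℤ) :
    ‖fourierCoeff g k‖ ≤ ∫ x : 𝕋, ‖g x‖ ∂haarAddCircle := by
  rw [fourierCoeff]
  refine (norm_integral_le_integral_norm _).trans_eq ?_
  refine integral_congr_ae (Filter.Eventually.of_forall fun x => ?_)
  simp only [norm_smul, norm_fourier_eq', one_mul]

lemma memL2_haar (g : 𝕋 → ℂ) (hg : MemLp g 2 volume) : MemLp g 2 haarAddCircle := by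
  have h2 := hg.smul_measure (c := (ENNReal.ofReal (2 * Real.pi))⁻¹)
    (by simp [ENNReal.inv_ne_top, ENNReal.ofReal_pos, Real.pi_pos, Real.two_pi_pos])
  have : (ENNReal.ofReal (2 * Real.pi))⁻¹ • (volume : Measure 𝕋) = haarAddCircle := by
    rw [volume_eq_smul_haarAddCircle, smul_smul,
      ENNReal.inv_mul_cancel (ENNReal.ofReal_pos.2 (by positivity)).ne'
        ENNReal.ofReal_ne_top, one_smul]
  rwa [this] at h2

lemma integrable_haar (g : 𝕋 → ℂ) (hg : MemLp g 2 volume) : Integrable g haarAddCircle := by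
  have := (memL2_haar g hg).mono_exponent (by norm_num : (1:ℝ≥0∞) ≤ 2)
  exact memLp_one_iff_integrable.mp this

lemma fc_mul_tsum (g : 𝕋 → ℂ) (hgm : AEStronglyMeasurable g haarAddCircle)
    (hgi : Integrable g haarAddCircle) (m : ℤ → ℂ) (hm : Summable fun k => ‖m k‖) (k : ℤ) :
    fourierCoeff (fun x : 𝕋 => g x * ∑' k₁, m k₁ * fourier k₁ x) k
      = ∑' k₁, m k₁ * fourierCoeff g (k - k₁) := by
  rw [fourierCoeff]
  have h1 : ∀ x : 𝕋, fourier (-k) x • (g x * ∑' k₁, m k₁ * fourier k₁ x)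
      = ∑' k₁, (fourier (-k) x * g x) * (m k₁ * fourier k₁ x) := by
    intro x
    rw [smul_eq_mul, ← mul_assoc]
    exact (_root_.tsum_mul_left).symm
  rw [integral_congr_ae (Filter.Eventually.of_forall h1)]
  rw [integral_tsum]
  · refine tsum_congr fun k₁ => ?_
    have h2 : ∀ x : 𝕋, (fourier (-k) x * g x) * (m k₁ * fourier k₁ x)
        = m k₁ • (fourier (-(k - k₁)) x • g x) := by
      intro x
      rw [smul_eq_mul, smul_eq_mul]
      have : fourier (-(k - k₁)) x = fourier (-k) x * fourier k₁ x := by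
        rw [← fourier_add]; congr 1; ring
      rw [this]; ring
    rw [integral_congr_ae (Filter.Eventually.of_forall h2), integral_smul, ← fourierCoeff,
      smul_eq_mul]
  · intro k₁
    exact (((fourier (-k)).continuous.aestronglyMeasurable.mul hgm).mul
      (aestronglyMeasurable_const.mul (fourier k₁).continuous.aestronglyMeasurable))
  · have heq : ∀ k₁, ∫⁻ x : 𝕋, ‖(fourier (-k) x * g x) * (m k₁ * fourier k₁ x)‖₊ ∂haarAddCircle
        = (‖m k₁‖₊ : ℝ≥0∞) * ∫⁻ x : 𝕋, ‖g x‖₊ ∂haarAddCircle := by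
      intro k₁
      rw [← lintegral_const_mul' _ _ ENNReal.coe_ne_top]
      refine lintegral_congr fun x => ?_
      rw [← ENNReal.coe_mul]
      congr 1
      ext
      push_cast
      rw [norm_mul, norm_mul, norm_mul, norm_fourier_eq', norm_fourier_eq']
      ring
    refine ne_of_eq_of_ne (tsum_congr heq) ?_
    rw [ENNReal.tsum_mul_right]
    exact ENNReal.mul_ne_top (summable_enn_of_norm' hm) hgi.2.ne

end AuxCorpus

open AddCircle ENNReal NNReal in
lemma owr_mul_ofReal_sq (e : ℝ) (k : ℤ) (x : ℝ) (hx : 0 ≤ x) :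
    (owr e k * ENNReal.ofReal x)^2 = ENNReal.ofReal ((W k)^(2*e) * x^2) := by
  rw [mul_pow, owr_sq, ← ENNReal.ofReal_pow hx]
  unfold owr
  rw [← ENNReal.ofReal_mul (Real.rpow_nonneg (W_pos k).le _)]

open AddCircle ENNReal NNReal

-- norm of the Jop-1 symbol times coefficient
lemma norm_sym_mul (e : ℝ) (z : ℂ) (k : ℤ) :
    ‖(((1 + (k:ℝ)^2) ^ e : ℝ) : ℂ) * z‖ = (W k) ^ e * ‖z‖ := by
  rw [norm_mul, Complex.norm_real, Real.norm_eq_abs, _root_.abs_of_nonneg (Real.rpow_nonneg (by positivity) _)]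
  rfl

lemma sNorm_zero_fun (α : ℝ) : sNorm α (fun _ : 𝕋 => (0:ℂ)) = 0 := by
  have h0 : fc (fun _ : 𝕋 => (0:ℂ)) = fun _ => 0 := by
    funext k
    simp [fc, fourierCoeff]
  unfold sNorm sNormSq
  rw [h0]
  simp

theorem stmt8 (r : ℝ) (hr : 1/2 < r) :
    ∃ C > (0:ℝ), ∀ f g : 𝕋 → ℂ, MemH r f → MemH r g →
      sNorm r (Jop (-1) (g * Jop 1 f)) ≤ C * sNorm r f * sNorm r g := by
  obtain ⟨CE, hCEfin, hCE⟩ := core r hr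
  set C0 : ℝ := max (Real.sqrt CE.toReal) 1 with hC0
  have hC0pos : 0 < C0 := lt_of_lt_of_le one_pos (le_max_right _ _)
  refine ⟨C0, hC0pos, ?_⟩
  intro f g hf hg
  have hsNf : 0 ≤ sNorm r f := Real.sqrt_nonneg _
  have hsNg : 0 ≤ sNorm r g := Real.sqrt_nonneg _
  have hRHS : 0 ≤ C0 * sNorm r f * sNorm r g :=
    mul_nonneg (mul_nonneg hC0pos.le hsNf) hsNg
  by_cases hs : Summable (fun k : ℤ => (W k) ^ ((1:ℝ)/2) * ‖fc f k‖)
  case neg =>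
    -- the Fourier series of `Jop 1 f` is nowhere absolutely convergent: it is the zero function
    have hzero : Jop 1 f = fun _ : 𝕋 => (0:ℂ) := by
      funext x
      apply tsum_eq_zero_of_not_summable
      intro hsum
      apply hs
      have h1 : Summable (fun k : ℤ =>
          ‖(((1 + (k:ℝ)^2) ^ ((1:ℝ)/2) : ℝ) : ℂ) * fc f k * fourier k x‖) :=
        summable_norm_iff.mpr hsum
      refine h1.congr fun k => ?_
      rw [norm_mul, norm_fourier_eq', mul_one, norm_sym_mul]
    have hzero2 : g * Jop 1 f = fun _ : 𝕋 => (0:ℂ) := by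
      funext x
      rw [Pi.mul_apply, hzero]
      simp
    have hzero3 : Jop (-1) (g * Jop 1 f) = fun _ : 𝕋 => (0:ℂ) := by
      funext x
      rw [hzero2]
      unfold Jop mulOp
      have h0 : fc (fun _ : 𝕋 => (0:ℂ)) = fun _ => 0 := by
        funext k; simp [fc, fourierCoeff]
      rw [h0]
      simp
    rw [hzero3, sNorm_zero_fun]
    exact hRHS
  case pos =>
    have hgm : AEStronglyMeasurable g haarAddCircle := (memL2_haar g hg.1).aestronglyMeasurable
    have hgi : Integrable g haarAddCircle := integrable_haar g hg.1
    have hm : Summable (fun k : ℤ => ‖(((1 + (k:ℝ)^2) ^ ((1:ℝ)/2) : ℝ) : ℂ) * fc f k‖) :=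
      hs.congr fun k => (norm_sym_mul _ _ k).symm
    set h := g * Jop 1 f with hh
    have hcoef : ∀ k : ℤ, fc h k
        = ∑' k₁ : ℤ, ((((1 + (k₁:ℝ)^2) ^ ((1:ℝ)/2) : ℝ) : ℂ) * fc f k₁) * fc g (k - k₁) :=
      fun k => fc_mul_tsum g hgm hgi
        (fun k₁ => (((1 + (k₁:ℝ)^2) ^ ((1:ℝ)/2) : ℝ) : ℂ) * fc f k₁) hm k
    set u : ℤ → ℝ := fun k => (W k) ^ (r-1) * ‖fc h k‖ ^ 2 with hu_def
    have hu_nonneg : ∀ k, 0 ≤ u k :=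
      fun k => mul_nonneg (Real.rpow_nonneg (W_pos k).le _) (sq_nonneg _)
    have hSa : (∑' k : ℤ, (owr (r/2) k * ENNReal.ofReal ‖fc f k‖)^2)
        = ENNReal.ofReal (sNormSq r f) := by
      have h1 : ∀ k : ℤ, (owr (r/2) k * ENNReal.ofReal ‖fc f k‖)^2
          = ENNReal.ofReal ((W k) ^ r * ‖fc f k‖^2) := by
        intro k
        rw [owr_mul_ofReal_sq _ _ _ (norm_nonneg _)]
        congr 2
        ring
      rw [tsum_congr h1]
      exact (ENNReal.ofReal_tsum_of_nonneg
        (fun k => mul_nonneg (Real.rpow_nonneg (W_pos k).le _) (sq_nonneg _)) hf.2).symm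
    have hSb : (∑' k : ℤ, (owr (r/2) k * ENNReal.ofReal ‖fc g k‖)^2)
        = ENNReal.ofReal (sNormSq r g) := by
      have h1 : ∀ k : ℤ, (owr (r/2) k * ENNReal.ofReal ‖fc g k‖)^2
          = ENNReal.ofReal ((W k) ^ r * ‖fc g k‖^2) := by
        intro k
        rw [owr_mul_ofReal_sq _ _ _ (norm_nonneg _)]
        congr 2
        ring
      rw [tsum_congr h1]
      exact (ENNReal.ofReal_tsum_of_nonneg
        (fun k => mul_nonneg (Real.rpow_nonneg (W_pos k).le _) (sq_nonneg _)) hg.2).symm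
    have hinner : ∀ k : ℤ, ENNReal.ofReal ‖fc h k‖
        ≤ ∑' k₁ : ℤ, owr (1/2) k₁ * ENNReal.ofReal ‖fc f k₁‖ * ENNReal.ofReal ‖fc g (k - k₁)‖ := by
      intro k
      have hsum1 : Summable (fun k₁ : ℤ =>
          ‖((((1 + (k₁:ℝ)^2) ^ ((1:ℝ)/2) : ℝ) : ℂ) * fc f k₁) * fc g (k - k₁)‖) := by
        refine Summable.of_nonneg_of_le (fun k₁ => norm_nonneg _) (fun k₁ => ?_)
          (hm.mul_right (∫ x : 𝕋, ‖g x‖ ∂haarAddCircle))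
        rw [norm_mul]
        exact mul_le_mul_of_nonneg_left (fc_norm_le g (k - k₁)) (norm_nonneg _)
      calc ENNReal.ofReal ‖fc h k‖
          ≤ ENNReal.ofReal (∑' k₁ : ℤ,
              ‖((((1 + (k₁:ℝ)^2) ^ ((1:ℝ)/2) : ℝ) : ℂ) * fc f k₁) * fc g (k - k₁)‖) := by
            apply ENNReal.ofReal_le_ofReal
            rw [hcoef k]
            exact norm_tsum_le_tsum_norm hsum1
      _ = ∑' k₁ : ℤ, ENNReal.ofReal
            ‖((((1 + (k₁:ℝ)^2) ^ ((1:ℝ)/2) : ℝ) : ℂ) * fc f k₁) * fc g (k - k₁)‖ :=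
            ENNReal.ofReal_tsum_of_nonneg (fun _ => norm_nonneg _) hsum1
      _ = ∑' k₁ : ℤ, owr (1/2) k₁ * ENNReal.ofReal ‖fc f k₁‖ * ENNReal.ofReal ‖fc g (k - k₁)‖ := by
            refine tsum_congr fun k₁ => ?_
            rw [norm_mul, norm_sym_mul,
              ENNReal.ofReal_mul (mul_nonneg (Real.rpow_nonneg (W_pos k₁).le _) (norm_nonneg _)),
              ENNReal.ofReal_mul (Real.rpow_nonneg (W_pos k₁).le _)]
            rfl
    have hBBfin : CE * ENNReal.ofReal (sNormSq r f) * ENNReal.ofReal (sNormSq r g) ≠ ⊤ :=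
      ENNReal.mul_ne_top (ENNReal.mul_ne_top hCEfin ENNReal.ofReal_ne_top) ENNReal.ofReal_ne_top
    have hmain : ∑' k : ℤ, ENNReal.ofReal (u k)
        ≤ CE * ENNReal.ofReal (sNormSq r f) * ENNReal.ofReal (sNormSq r g) := by
      rw [← hSa, ← hSb]
      calc ∑' k : ℤ, ENNReal.ofReal (u k)
          = ∑' k : ℤ, (owr ((r-1)/2) k * ENNReal.ofReal ‖fc h k‖)^2 := by
            refine tsum_congr fun k => ?_
            rw [owr_mul_ofReal_sq _ _ _ (norm_nonneg _), hu_def]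
            congr 2
            ring
      _ ≤ ∑' k : ℤ, (owr ((r-1)/2) k * ∑' k₁ : ℤ,
            owr (1/2) k₁ * ENNReal.ofReal ‖fc f k₁‖ * ENNReal.ofReal ‖fc g (k - k₁)‖)^2 := by
            gcongr with k
            exact hinner k
      _ ≤ _ := hCE (fun k => ENNReal.ofReal ‖fc f k‖) (fun k => ENNReal.ofReal ‖fc g k‖)
    have hne : (∑' k : ℤ, ENNReal.ofReal (u k)) ≠ ⊤ :=
      (lt_of_le_of_lt hmain hBBfin.lt_top).ne
    have husum : Summable u := by
      have h1 := ENNReal.summable_toReal hne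
      refine h1.congr fun k => ?_
      rw [ENNReal.toReal_ofReal (hu_nonneg k)]
    have hsq_f : 0 ≤ sNormSq r f := tsum_nonneg fun k =>
      mul_nonneg (Real.rpow_nonneg (by positivity) _) (sq_nonneg _)
    have hsq_g : 0 ≤ sNormSq r g := tsum_nonneg fun k =>
      mul_nonneg (Real.rpow_nonneg (by positivity) _) (sq_nonneg _)
    have hutsum : ∑' k : ℤ, u k ≤ CE.toReal * sNormSq r f * sNormSq r g := by
      have h1 : ENNReal.ofReal (∑' k : ℤ, u k)
          ≤ CE * ENNReal.ofReal (sNormSq r f) * ENNReal.ofReal (sNormSq r g) := by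
        rw [ENNReal.ofReal_tsum_of_nonneg hu_nonneg husum]
        exact hmain
      have h2 := ENNReal.toReal_mono hBBfin h1
      rw [ENNReal.toReal_ofReal (tsum_nonneg hu_nonneg), ENNReal.toReal_mul, ENNReal.toReal_mul,
        ENNReal.toReal_ofReal hsq_f, ENNReal.toReal_ofReal hsq_g] at h2
      exact h2
    have hs2 : Summable (fun k : ℤ =>
        ‖(((1 + (k:ℝ)^2) ^ ((-1:ℝ)/2) : ℝ) : ℂ) * fc h k‖) := by
      refine Summable.of_nonneg_of_le (fun k => norm_nonneg _) (fun k => ?_)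
        (((sumW r hr).add husum).div_const 2)
      rw [norm_sym_mul]
      set a := (W k) ^ (-(r/2)) with ha
      set b := (W k) ^ ((r-1)/2) * ‖fc h k‖ with hb
      have ha2 : a^2 = (W k) ^ (-r) := by
        rw [ha, ← Real.rpow_natCast ((W k) ^ (-(r/2))) 2, ← Real.rpow_mul (W_pos k).le]
        congr 1
        push_cast
        ring
      have hb2 : b^2 = u k := by
        rw [hb, mul_pow, ← Real.rpow_natCast ((W k) ^ ((r-1)/2)) 2, ← Real.rpow_mul (W_pos k).le]
        congr 2
        push_cast
        ring
      have hab : (W k) ^ ((-1:ℝ)/2) * ‖fc h k‖ = a * b := by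
        rw [ha, hb, ← mul_assoc, ← Real.rpow_add (W_pos k)]
        congr 2
        ring
      rw [hab]
      have h0a : 0 ≤ a := Real.rpow_nonneg (W_pos k).le _
      have h0b : 0 ≤ b := mul_nonneg (Real.rpow_nonneg (W_pos k).le _) (norm_nonneg _)
      have : a * b ≤ (a^2 + b^2)/2 := by nlinarith [sq_nonneg (a-b)]
      rw [ha2, hb2] at this
      exact this
    have hfc2 : ∀ k : ℤ, fc (Jop (-1) h) k
        = (((1 + (k:ℝ)^2) ^ ((-1:ℝ)/2) : ℝ) : ℂ) * fc h k :=
      fun k => fc_tsum (fun k => (((1 + (k:ℝ)^2) ^ ((-1:ℝ)/2) : ℝ) : ℂ) * fc h k) hs2 k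
    have hnormsq : sNormSq r (Jop (-1) h) = ∑' k : ℤ, u k := by
      refine tsum_congr fun k => ?_
      rw [hfc2 k, norm_sym_mul]
      show (W k) ^ r * ((W k) ^ ((-1:ℝ)/2) * ‖fc h k‖)^2 = u k
      rw [mul_pow, ← Real.rpow_natCast ((W k) ^ ((-1:ℝ)/2)) 2, ← Real.rpow_mul (W_pos k).le,
        ← mul_assoc, ← Real.rpow_add (W_pos k)]
      rw [hu_def]
      congr 2
      push_cast
      ring
    have hfin : sNorm r (Jop (-1) h) ≤ Real.sqrt CE.toReal * sNorm r f * sNorm r g := by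
      unfold sNorm
      rw [hnormsq]
      calc Real.sqrt (∑' k : ℤ, u k)
          ≤ Real.sqrt (CE.toReal * sNormSq r f * sNormSq r g) := Real.sqrt_le_sqrt hutsum
      _ = Real.sqrt CE.toReal * Real.sqrt (sNormSq r f) * Real.sqrt (sNormSq r g) := by
          rw [Real.sqrt_mul (mul_nonneg ENNReal.toReal_nonneg hsq_f),
            Real.sqrt_mul ENNReal.toReal_nonneg]
    refine hfin.trans ?_
    have h1 : Real.sqrt CE.toReal ≤ C0 := le_max_left _ _
    exact mul_le_mul_of_nonneg_right
      (mul_le_mul_of_nonneg_right h1 (Real.sqrt_nonneg _)) (Real.sqrt_nonneg _)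
end
end

section
/- Let r > 1/2, τ ∈ ℝ, and let f ∈ H^r(𝕋) have zero mean, i.e. f̂₀ = 0. Then the following identity holds in L²(𝕋): ∫₀^τ e^{is∂ₓ²} ( (e^{−is∂ₓ²} f)² ) ds = (i/2) [ (∂ₓ^{−1} f)² − e^{iτ∂ₓ²} ( (e^{−iτ∂ₓ²} ∂ₓ^{−1} f)² ) ]. Equivalently, at each Fourier mode k: Σ_{k₁+k₂=k} ( ∫₀^τ e^{−is(k²−k₁²−k₂²)} ds ) f̂_{k₁} f̂_{k₂} equals the k-th Fourier coefficient of the right-hand side. -/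
open MeasureTheory Complex

noncomputable section

local notation "𝕋" => AddCircle (2 * Real.pi)

/-! ### Auxiliary machinery for `stmt10` -/

/-- The function with Fourier coefficients `b`. -/
def mkF (b : ℤ → ℂ) : 𝕋 → ℂ := fun x => ∑' k : ℤ, b k * fourier k x

/-- Coefficients of `∂ₓ⁻¹ f` in terms of those of `f`. -/
def aCoef (c : ℤ → ℂ) (k : ℤ) : ℂ :=
  (if k = 0 then 0 else (Complex.I * (k : ℂ)) ^ (-1 : ℤ)) * c k

/-- The resonance phase function. -/
def Phi (q : ℤ × ℤ) : ℂ :=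
  ((q.1 : ℂ)) ^ 2 - ((q.2 : ℂ)) ^ 2 - (((q.1 - q.2 : ℤ) : ℂ)) ^ 2

/-- The shear equivalence `(k₁,k₂) ↦ (k₁+k₂, k₁)` (inverse direction). -/
def σeq : ℤ × ℤ ≃ ℤ × ℤ where
  toFun q := (q.2, q.1 - q.2)
  invFun p := (p.1 + p.2, p.1)
  left_inv q := by simp
  right_inv p := by simp

lemma fourier_norm_one (k : ℤ) (x : 𝕋) : ‖(fourier k x : ℂ)‖ = 1 := by
  rw [fourier_apply]
  exact Circle.norm_coe _

lemma nexp (c : ℂ) (hc : c.re = 0) : ‖Complex.exp c‖ = 1 := by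
  rw [Complex.norm_exp, hc, Real.exp_zero]

lemma re_zero_aux (t : ℝ) (z : ℂ) (hz : z.im = 0) : (-(Complex.I * (t : ℂ) * z)).re = 0 := by
  simp [Complex.mul_re, Complex.mul_im, hz]

lemma im_int_sq (k : ℤ) : (((k : ℂ)) ^ 2).im = 0 := by
  simp [pow_two]

lemma phi_im (q : ℤ × ℤ) : (Phi q).im = 0 := by
  simp [Phi, pow_two]

lemma nexp_sq (t : ℝ) (k : ℤ) : ‖Complex.exp (-(Complex.I * (t : ℂ) * (k : ℂ) ^ 2))‖ = 1 :=
  nexp _ (re_zero_aux t _ (im_int_sq k))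

lemma nexp_phi (t : ℝ) (q : ℤ × ℤ) : ‖Complex.exp (-(Complex.I * (t : ℂ) * Phi q))‖ = 1 :=
  nexp _ (re_zero_aux t _ (phi_im q))

lemma shear_summable {g : ℤ → ℝ} (hg : Summable g) (h0 : ∀ k, 0 ≤ g k) :
    Summable fun q : ℤ × ℤ => g q.2 * g (q.1 - q.2) := by
  have h1 : Summable fun p : ℤ × ℤ => g p.1 * g p.2 :=
    hg.mul_of_nonneg hg (fun k => h0 k) (fun k => h0 k)
  exact (Equiv.summable_iff σeq).mpr h1

lemma mulOp_eq (m : ℤ → ℂ) (f : 𝕋 → ℂ) : mulOp m f = mkF (fun k => m k * fc f k) := rfl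

/-- The integral of a character over the torus. -/
lemma integral_fourier (m : ℤ) :
    (∫ t : 𝕋, fourier m t ∂AddCircle.haarAddCircle) = if m = 0 then 1 else 0 := by
  rcases eq_or_ne m 0 with h | h
  · simp only [h, if_pos rfl, fourier_zero]
    simp [measure_univ]
  · have h1 : (∫ t : 𝕋, fourier m t ∂AddCircle.haarAddCircle) = fourierCoeff (fun _ : 𝕋 => (1 : ℂ)) (-m) := by
      simp [fourierCoeff, smul_eq_mul]
    rw [h1, fourierCoeff_eq_intervalIntegral _ _ 0, if_neg h]
    have h2 : Set.EqOn (fun x : ℝ => (fourier (- -m) (x : 𝕋) : ℂ) • (1 : ℂ))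
        (fun x : ℝ => Complex.exp ((Complex.I * m) * x)) (Set.uIcc 0 (0 + 2 * Real.pi)) := by
      intro x _
      simp only [neg_neg, smul_eq_mul, mul_one, fourier_coe_apply]
      congr 1
      have hπ : (Real.pi : ℂ) ≠ 0 := Complex.ofReal_ne_zero.mpr Real.pi_ne_zero
      push_cast
      field_simp
    rw [intervalIntegral.integral_congr h2]
    have hc : (Complex.I * m) ≠ 0 :=
      mul_ne_zero Complex.I_ne_zero (Int.cast_ne_zero.mpr h)
    rw [integral_exp_mul_complex hc]
    have h3 : Complex.exp (Complex.I * m * ((0 : ℝ) + 2 * Real.pi : ℝ)) = 1 := by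
      have : (Complex.I * m) * ((0 : ℝ) + 2 * Real.pi : ℝ) = (m : ℂ) * (2 * Real.pi * Complex.I) := by
        push_cast; ring
      rw [this, Complex.exp_int_mul_two_pi_mul_I]
    rw [h3]
    simp

/-- Fourier coefficient of an absolutely convergent trigonometric series. -/
lemma fc_tsum_s10 {ι : Type} [Countable ι] (d : ι → ℂ) (n : ι → ℤ)
    (hd : Summable fun i => ‖d i‖) (k : ℤ) :
    fc (fun x : 𝕋 => ∑' i, d i * fourier (n i) x) k
      = ∑' i, (if n i = k then d i else 0) := by
  have key : ∀ t : 𝕋, (fourier (-k) t : ℂ) • (∑' i, d i * fourier (n i) t)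
      = ∑' i, (fourier (-k) t : ℂ) * (d i * fourier (n i) t) := by
    intro t; rw [smul_eq_mul]; exact tsum_mul_left.symm
  have hmeas : ∀ i, AEStronglyMeasurable
      (fun t : 𝕋 => (fourier (-k) t : ℂ) * (d i * fourier (n i) t)) AddCircle.haarAddCircle := by
    intro i
    exact ((map_continuous (fourier (-k))).mul
      (continuous_const.mul (map_continuous (fourier (n i))))).aestronglyMeasurable
  have hnorm : ∀ i (t : 𝕋), ‖(fourier (-k) t : ℂ) * (d i * fourier (n i) t)‖ = ‖d i‖ := by
    intro i t
    rw [norm_mul, norm_mul, fourier_norm_one, fourier_norm_one, one_mul, mul_one]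
  have hbound : (∑' i, ∫⁻ t : 𝕋, ‖(fourier (-k) t : ℂ) * (d i * fourier (n i) t)‖₊
      ∂AddCircle.haarAddCircle) ≠ ⊤ := by
    have heq : ∀ i, (∫⁻ t : 𝕋, ‖(fourier (-k) t : ℂ) * (d i * fourier (n i) t)‖₊
        ∂AddCircle.haarAddCircle) = (‖d i‖₊ : ENNReal) := by
      intro i
      have : (fun t : 𝕋 => (‖(fourier (-k) t : ℂ) * (d i * fourier (n i) t)‖₊ : ENNReal))
          = fun _ => (‖d i‖₊ : ENNReal) := by
        funext t
        congr 1
        ext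
        simp only [coe_nnnorm]
        exact hnorm i t
      rw [this, lintegral_const, measure_univ, mul_one]
    rw [tsum_congr heq]
    exact ENNReal.tsum_coe_ne_top_iff_summable.mpr (NNReal.summable_coe.mp (by simpa using hd))
  unfold fc fourierCoeff
  rw [integral_congr_ae (Filter.Eventually.of_forall key), integral_tsum hmeas hbound]
  refine tsum_congr fun i => ?_
  have hpt : ∀ t : 𝕋, (fourier (-k) t : ℂ) * (d i * fourier (n i) t)
      = d i * fourier (n i + -k) t := by
    intro t; rw [fourier_add]; ring
  rw [integral_congr_ae (Filter.Eventually.of_forall hpt), MeasureTheory.integral_const_mul,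
    integral_fourier]
  simp only [add_neg_eq_zero, mul_ite, mul_one, mul_zero]

lemma fc_mkF (b : ℤ → ℂ) (hb : Summable fun k => ‖b k‖) (k : ℤ) : fc (mkF b) k = b k := by
  have h := fc_tsum_s10 b (fun i => i) hb k
  have h2 : fc (mkF b) k = ∑' i : ℤ, (if i = k then b i else 0) := h
  rw [h2, tsum_eq_single k (fun j hj => if_neg hj)]
  simp

lemma mkF_sq (b : ℤ → ℂ) (hb : Summable fun k => ‖b k‖) (x : 𝕋) :
    mkF b x * mkF b x = ∑' q : ℤ × ℤ, (b q.2 * b (q.1 - q.2)) * fourier q.1 x := by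
  have hsum : Summable fun k : ℤ => ‖b k * fourier k x‖ :=
    hb.congr fun k => by rw [norm_mul, fourier_norm_one, mul_one]
  have h1 : mkF b x * mkF b x
      = ∑' p : ℤ × ℤ, (b p.1 * fourier p.1 x) * (b p.2 * fourier p.2 x) :=
    tsum_mul_tsum_of_summable_norm hsum hsum
  rw [h1, ← Equiv.tsum_eq σeq]
  refine tsum_congr fun q => ?_
  have hidx : q.2 + (q.1 - q.2) = q.1 := by ring
  calc (b q.2 * fourier q.2 x) * (b (q.1 - q.2) * fourier (q.1 - q.2) x)
      = (b q.2 * b (q.1 - q.2)) * (fourier q.2 x * fourier (q.1 - q.2) x) := by ring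
    _ = (b q.2 * b (q.1 - q.2)) * fourier q.1 x := by
        rw [← fourier_add, hidx]

lemma summable_shear_norm (b : ℤ → ℂ) (hb : Summable fun k => ‖b k‖) :
    Summable fun q : ℤ × ℤ => ‖b q.2‖ * ‖b (q.1 - q.2)‖ :=
  shear_summable hb fun k => norm_nonneg _

lemma fc_sq (b : ℤ → ℂ) (hb : Summable fun k => ‖b k‖) (k : ℤ) :
    fc (mkF b * mkF b) k = ∑' j : ℤ, b j * b (k - j) := by
  have hQ : Summable fun q : ℤ × ℤ => ‖b q.2 * b (q.1 - q.2)‖ :=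
    (summable_shear_norm b hb).congr fun q => (norm_mul _ _).symm
  have hfun : (mkF b * mkF b)
      = fun x : 𝕋 => ∑' q : ℤ × ℤ, (b q.2 * b (q.1 - q.2)) * fourier q.1 x :=
    funext fun x => mkF_sq b hb x
  have h1 : fc (mkF b * mkF b) k
      = ∑' q : ℤ × ℤ, (if q.1 = k then b q.2 * b (q.1 - q.2) else 0) := by
    rw [hfun]; exact fc_tsum_s10 _ _ hQ k
  rw [h1]
  have hite : Summable fun q : ℤ × ℤ => (if q.1 = k then b q.2 * b (q.1 - q.2) else 0) := by
    refine Summable.of_norm_bounded (summable_shear_norm b hb) fun q => ?_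
    split_ifs
    · exact le_of_eq (norm_mul _ _)
    · simp only [norm_zero]
      positivity
  rw [hite.tsum_prod' hite.prod_factor]
  rw [tsum_eq_single k ?_]
  · simp
  · intro k' hk'
    simp [if_neg hk']

lemma eitDxx_sq (b : ℤ → ℂ) (hb : Summable fun k => ‖b k‖) (t : ℝ) (x : 𝕋) :
    eitDxx t (mkF b * mkF b) x
      = ∑' q : ℤ × ℤ, Complex.exp (-(Complex.I * (t : ℂ) * (q.1 : ℂ) ^ 2))
          * (b q.2 * b (q.1 - q.2)) * fourier q.1 x := by
  have h1 : eitDxx t (mkF b * mkF b) x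
      = ∑' k : ℤ, Complex.exp (-(Complex.I * (t : ℂ) * (k : ℂ) ^ 2))
          * fc (mkF b * mkF b) k * fourier k x := rfl
  have h2 : ∀ k : ℤ, Complex.exp (-(Complex.I * (t : ℂ) * (k : ℂ) ^ 2))
        * fc (mkF b * mkF b) k * fourier k x
      = ∑' j : ℤ, Complex.exp (-(Complex.I * (t : ℂ) * (k : ℂ) ^ 2))
          * (b j * b (k - j)) * fourier k x := by
    intro k
    rw [fc_sq b hb k, ← tsum_mul_left, ← tsum_mul_right]
  have hF : Summable fun q : ℤ × ℤ => Complex.exp (-(Complex.I * (t : ℂ) * (q.1 : ℂ) ^ 2))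
      * (b q.2 * b (q.1 - q.2)) * fourier q.1 x := by
    refine Summable.of_norm_bounded (summable_shear_norm b hb) fun q => ?_
    rw [norm_mul, norm_mul, nexp_sq, one_mul, fourier_norm_one, mul_one, norm_mul]
  rw [h1, tsum_congr h2]
  exact (hF.tsum_prod' hF.prod_factor).symm

/-- Interchanging an interval integral with a `tsum`, under uniform summable bounds. -/
lemma interval_tsum {ι : Type} [Countable ι] (u : ι → ℝ → ℂ) (B : ι → ℝ)
    (hcont : ∀ i, Continuous (u i)) (hB : Summable B) (hbd : ∀ i s, ‖u i s‖ ≤ B i)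
    (a b : ℝ) :
    (∫ s in a..b, ∑' i, u i s) = ∑' i, ∫ s in a..b, u i s := by
  have hB0 : ∀ i, 0 ≤ B i := fun i => le_trans (norm_nonneg _) (hbd i a)
  have key : (∫ s in Set.uIoc a b, ∑' i, u i s) = ∑' i, ∫ s in Set.uIoc a b, u i s := by
    apply integral_tsum (fun i => (hcont i).aestronglyMeasurable)
    have hle : ∀ i, (∫⁻ s in Set.uIoc a b, ‖u i s‖₊) ≤ ENNReal.ofReal (B i) * volume (Set.uIoc a b) := by
      intro i
      calc (∫⁻ s in Set.uIoc a b, ‖u i s‖₊)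
          ≤ ∫⁻ _ in Set.uIoc a b, ENNReal.ofReal (B i) := by
            refine lintegral_mono fun s => ?_
            rw [← enorm_eq_nnnorm, ← ofReal_norm]
            exact ENNReal.ofReal_le_ofReal (hbd i s)
        _ = ENNReal.ofReal (B i) * volume (Set.uIoc a b) := by
            rw [MeasureTheory.lintegral_const, Measure.restrict_apply MeasurableSet.univ,
              Set.univ_inter]
    refine ne_top_of_le_ne_top ?_ (ENNReal.tsum_le_tsum hle)
    rw [ENNReal.tsum_mul_right]
    apply ENNReal.mul_ne_top
    · rw [← ENNReal.ofReal_tsum_of_nonneg hB0 hB]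
      exact ENNReal.ofReal_ne_top
    · rw [Set.uIoc, Real.volume_Ioc]
      exact ENNReal.ofReal_ne_top
  by_cases hab : a ≤ b
  · simp only [intervalIntegral.intervalIntegral_eq_integral_uIoc, if_pos hab, one_smul, key]
  · simp only [intervalIntegral.intervalIntegral_eq_integral_uIoc, if_neg hab, key,
      neg_smul, one_smul, ← tsum_neg]

/-- Combining phases. -/
lemma term_massage (t : ℝ) (c : ℤ → ℂ) (q : ℤ × ℤ) (x : 𝕋) :
    Complex.exp (-(Complex.I * (t : ℂ) * (q.1 : ℂ) ^ 2)) *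
      ((Complex.exp (-(Complex.I * ((-t : ℝ) : ℂ) * (q.2 : ℂ) ^ 2)) * c q.2) *
       (Complex.exp (-(Complex.I * ((-t : ℝ) : ℂ) * ((q.1 - q.2 : ℤ) : ℂ) ^ 2)) * c (q.1 - q.2))) *
      fourier q.1 x
    = Complex.exp (-(Complex.I * (t : ℂ) * Phi q))
        * ((c q.2 * c (q.1 - q.2)) * fourier q.1 x) := by
  rw [show Complex.exp (-(Complex.I * (t : ℂ) * (q.1 : ℂ) ^ 2)) *
      ((Complex.exp (-(Complex.I * ((-t : ℝ) : ℂ) * (q.2 : ℂ) ^ 2)) * c q.2) *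
       (Complex.exp (-(Complex.I * ((-t : ℝ) : ℂ) * ((q.1 - q.2 : ℤ) : ℂ) ^ 2)) * c (q.1 - q.2))) *
      fourier q.1 x
    = (Complex.exp (-(Complex.I * (t : ℂ) * (q.1 : ℂ) ^ 2)) *
        Complex.exp (-(Complex.I * ((-t : ℝ) : ℂ) * (q.2 : ℂ) ^ 2)) *
        Complex.exp (-(Complex.I * ((-t : ℝ) : ℂ) * ((q.1 - q.2 : ℤ) : ℂ) ^ 2)))
        * ((c q.2 * c (q.1 - q.2)) * fourier q.1 x) from by ring,
    ← Complex.exp_add, ← Complex.exp_add]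
  congr 2
  simp only [Phi]
  push_cast
  ring

lemma alg (E jj nn cj cn : ℂ) :
    (E - 1) / (-(Complex.I * (2 * jj * nn))) * (cj * cn)
      = Complex.I / 2 * ((Complex.I * jj) ^ (-1 : ℤ) * cj * ((Complex.I * nn) ^ (-1 : ℤ) * cn)
          - E * ((Complex.I * jj) ^ (-1 : ℤ) * cj * ((Complex.I * nn) ^ (-1 : ℤ) * cn))) := by
  simp only [zpow_neg, zpow_one, mul_inv, inv_neg, Complex.inv_I, div_eq_mul_inv]
  linear_combination (Complex.I * (E - 1) * cj * cn * jj⁻¹ * nn⁻¹ / 2) * Complex.I_sq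

/-- Evaluation of the per-mode oscillatory integral. -/
lemma key_scalar (τ : ℝ) (c : ℤ → ℂ) (h0 : c 0 = 0) (q : ℤ × ℤ) :
    (∫ s in (0 : ℝ)..τ, Complex.exp (-(Complex.I * (s : ℂ) * Phi q))) * (c q.2 * c (q.1 - q.2))
      = Complex.I / 2 * (aCoef c q.2 * aCoef c (q.1 - q.2)
          - Complex.exp (-(Complex.I * (τ : ℂ) * Phi q))
              * (aCoef c q.2 * aCoef c (q.1 - q.2))) := by
  by_cases hj : q.2 = 0
  · simp [aCoef, hj, h0]
  by_cases hn : q.1 - q.2 = 0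
  · simp [aCoef, hn, h0]
  have hj' : ((q.2 : ℂ)) ≠ 0 := Int.cast_ne_zero.mpr hj
  have hn' : (((q.1 - q.2 : ℤ) : ℂ)) ≠ 0 := Int.cast_ne_zero.mpr hn
  have hΦ : Phi q = 2 * (q.2 : ℂ) * ((q.1 - q.2 : ℤ) : ℂ) := by
    simp only [Phi]
    push_cast
    ring
  rw [hΦ]
  have hw : (2 * (q.2 : ℂ) * ((q.1 - q.2 : ℤ) : ℂ)) ≠ 0 :=
    mul_ne_zero (mul_ne_zero two_ne_zero hj') hn'
  have hcw : -(Complex.I * (2 * (q.2 : ℂ) * ((q.1 - q.2 : ℤ) : ℂ))) ≠ 0 :=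
    neg_ne_zero.mpr (mul_ne_zero Complex.I_ne_zero hw)
  have hint : ∀ s : ℝ, -(Complex.I * (s : ℂ) * (2 * (q.2 : ℂ) * ((q.1 - q.2 : ℤ) : ℂ)))
      = (-(Complex.I * (2 * (q.2 : ℂ) * ((q.1 - q.2 : ℤ) : ℂ)))) * (s : ℂ) := fun s => by ring
  simp only [hint]
  rw [integral_exp_mul_complex hcw]
  simp only [Complex.ofReal_zero, mul_zero, Complex.exp_zero]
  have hE : (-(Complex.I * (2 * (q.2 : ℂ) * ((q.1 - q.2 : ℤ) : ℂ)))) * (τ : ℂ)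
      = -(Complex.I * (τ : ℂ) * (2 * (q.2 : ℂ) * ((q.1 - q.2 : ℤ) : ℂ))) := by ring
  rw [hE]
  simp only [aCoef, if_neg hj, if_neg hn]
  exact alg _ _ _ _ _

lemma summable_fc {r : ℝ} (hr : 1/2 < r) (f : 𝕋 → ℂ)
    (hf2 : Summable fun k : ℤ => (1 + (k : ℝ) ^ 2) ^ r * ‖fc f k‖ ^ 2) :
    Summable fun k : ℤ => ‖fc f k‖ := by
  have h2r : 1 < 2 * r := by linarith
  have hone : Summable fun k : ℤ => (if k = 0 then (1 : ℝ) else 0) := by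
    apply summable_of_finite_support
    apply Set.Finite.subset (Set.finite_singleton (0 : ℤ))
    intro k hk
    simp only [Function.mem_support] at hk
    by_contra h
    simp only [Set.mem_singleton_iff] at h
    exact hk (if_neg h)
  have hg : Summable fun k : ℤ => |(k : ℝ)| ^ (-(2 * r)) + (if k = 0 then (1 : ℝ) else 0) :=
    (Real.summable_abs_int_rpow h2r).add hone
  have hpow : Summable fun k : ℤ => (1 + (k : ℝ) ^ 2) ^ (-r) := by
    apply Summable.of_norm_bounded hg
    intro k
    rw [Real.norm_eq_abs, _root_.abs_of_nonneg (Real.rpow_nonneg (by positivity) _)]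
    rcases eq_or_ne k 0 with h | h
    · subst h
      rw [show ((0 : ℤ) : ℝ) = 0 by norm_num, if_pos rfl, abs_zero,
        Real.zero_rpow (show -(2 * r) ≠ 0 by linarith),
        show (1 : ℝ) + 0 ^ 2 = 1 by norm_num, Real.one_rpow]
      norm_num
    · have hk0 : (k : ℝ) ≠ 0 := Int.cast_ne_zero.mpr h
      have h1 : (0 : ℝ) < (k : ℝ) ^ 2 := by positivity
      have step1 : (1 + (k : ℝ) ^ 2) ^ (-r) ≤ ((k : ℝ) ^ 2) ^ (-r) :=
        Real.rpow_le_rpow_of_nonpos h1 (by linarith) (by linarith)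
      have step2 : (((k : ℝ)) ^ 2) ^ (-r) = |(k : ℝ)| ^ (-(2 * r)) := by
        rw [← _root_.sq_abs, ← Real.rpow_natCast |(k : ℝ)| 2, ← Real.rpow_mul (abs_nonneg _)]
        congr 1
        push_cast
        ring
      rw [if_neg h, add_zero]
      exact le_of_le_of_eq step1 step2
  apply Summable.of_norm_bounded ((hpow.add hf2).mul_left (1/2))
  intro k
  rw [Real.norm_eq_abs, _root_.abs_of_nonneg (norm_nonneg _)]
  have hpos : (0 : ℝ) < 1 + (k : ℝ) ^ 2 := by positivity
  have hsq1 : ((1 + (k : ℝ) ^ 2) ^ (-(r/2))) ^ 2 = (1 + (k : ℝ) ^ 2) ^ (-r) := by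
    rw [← Real.rpow_natCast ((1 + (k : ℝ) ^ 2) ^ (-(r/2))) 2, ← Real.rpow_mul hpos.le]
    congr 1
    push_cast
    ring
  have hb2 : (((1 + (k : ℝ) ^ 2) ^ (r/2)) * ‖fc f k‖) ^ 2
      = (1 + (k : ℝ) ^ 2) ^ r * ‖fc f k‖ ^ 2 := by
    rw [mul_pow]
    congr 1
    rw [← Real.rpow_natCast ((1 + (k : ℝ) ^ 2) ^ (r/2)) 2, ← Real.rpow_mul hpos.le]
    congr 1
    push_cast
    ring
  have hmul : (1 + (k : ℝ) ^ 2) ^ (-(r/2)) * (1 + (k : ℝ) ^ 2) ^ (r/2) = 1 := by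
    rw [← Real.rpow_add hpos]
    norm_num
  have hc : ‖fc f k‖ = (1 + (k : ℝ) ^ 2) ^ (-(r/2)) * ((1 + (k : ℝ) ^ 2) ^ (r/2) * ‖fc f k‖) := by
    rw [← mul_assoc, hmul, one_mul]
  have ham := two_mul_le_add_sq ((1 + (k : ℝ) ^ 2) ^ (-(r/2)))
    ((1 + (k : ℝ) ^ 2) ^ (r/2) * ‖fc f k‖)
  refine le_trans (le_of_eq hc) ?_
  nlinarith [ham, hsq1, hb2]

theorem stmt10 (r τ : ℝ) (hr : 1/2 < r) (f : 𝕋 → ℂ) (hf : MemH r f) (h0 : fc f 0 = 0) :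
    (fun x : 𝕋 => ∫ s in (0:ℝ)..τ, eitDxx s ((eitDxx (-s) f) * (eitDxx (-s) f)) x)
      =ᵐ[volume]
    ((Complex.I / 2) • ((Dpow (-1) f * Dpow (-1) f)
      - eitDxx τ ((eitDxx (-τ) (Dpow (-1) f)) * (eitDxx (-τ) (Dpow (-1) f))))) := by
  refine Filter.Eventually.of_forall fun x => ?_
  have Sc : Summable fun k : ℤ => ‖fc f k‖ := summable_fc hr f hf.2
  have Sa : Summable fun k : ℤ => ‖aCoef (fc f) k‖ := by
    refine Summable.of_norm_bounded Sc fun k => ?_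
    rw [Real.norm_eq_abs, _root_.abs_of_nonneg (norm_nonneg _), aCoef, norm_mul]
    rcases eq_or_ne k 0 with h | h
    · simp [h]
    · refine mul_le_of_le_one_left (norm_nonneg _) ?_
      rw [if_neg h, zpow_neg, zpow_one, norm_inv]
      refine inv_le_one_of_one_le₀ ?_
      rw [norm_mul, Complex.norm_I, one_mul, Complex.norm_intCast]
      exact_mod_cast Int.one_le_abs h
  -- pointwise expansion of the integrand
  have hpt : ∀ s : ℝ, eitDxx s ((eitDxx (-s) f) * (eitDxx (-s) f)) x
      = ∑' q : ℤ × ℤ, Complex.exp (-(Complex.I * (s : ℂ) * Phi q))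
          * ((fc f q.2 * fc f (q.1 - q.2)) * fourier q.1 x) := by
    intro s
    have hbs : eitDxx (-s) f
        = mkF (fun k => Complex.exp (-(Complex.I * ((-s : ℝ) : ℂ) * (k : ℂ) ^ 2)) * fc f k) := rfl
    have Sbs : Summable fun k : ℤ =>
        ‖Complex.exp (-(Complex.I * ((-s : ℝ) : ℂ) * (k : ℂ) ^ 2)) * fc f k‖ :=
      Sc.congr fun k => by rw [norm_mul, nexp_sq, one_mul]
    rw [hbs, eitDxx_sq _ Sbs s x]
    exact tsum_congr fun q => term_massage s (fc f) q x
  have hcont : ∀ q : ℤ × ℤ, Continuous (fun s : ℝ =>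
      Complex.exp (-(Complex.I * (s : ℂ) * Phi q))
        * ((fc f q.2 * fc f (q.1 - q.2)) * fourier q.1 x)) := by
    intro q
    apply Continuous.mul _ continuous_const
    apply Complex.continuous_exp.comp
    exact ((continuous_const.mul Complex.continuous_ofReal).mul continuous_const).neg
  have hbd : ∀ (q : ℤ × ℤ) (s : ℝ),
      ‖Complex.exp (-(Complex.I * (s : ℂ) * Phi q))
        * ((fc f q.2 * fc f (q.1 - q.2)) * fourier q.1 x)‖
      ≤ ‖fc f q.2‖ * ‖fc f (q.1 - q.2)‖ := by
    intro q s
    rw [norm_mul, nexp_phi, one_mul, norm_mul, norm_mul, fourier_norm_one, mul_one]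
  have hL : (∫ s in (0 : ℝ)..τ, eitDxx s ((eitDxx (-s) f) * (eitDxx (-s) f)) x)
      = ∑' q : ℤ × ℤ, (∫ s in (0 : ℝ)..τ, Complex.exp (-(Complex.I * (s : ℂ) * Phi q)))
          * ((fc f q.2 * fc f (q.1 - q.2)) * fourier q.1 x) := by
    rw [intervalIntegral.integral_congr
      (g := fun s => ∑' q : ℤ × ℤ, Complex.exp (-(Complex.I * (s : ℂ) * Phi q))
        * ((fc f q.2 * fc f (q.1 - q.2)) * fourier q.1 x)) (fun s _ => hpt s)]
    rw [interval_tsum _ _ hcont (summable_shear_norm _ Sc) hbd 0 τ]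
    exact tsum_congr fun q => intervalIntegral.integral_mul_const _ _
  have hD : Dpow (-1) f = mkF (aCoef (fc f)) := rfl
  have haτ : eitDxx (-τ) (mkF (aCoef (fc f)))
      = mkF (fun k => Complex.exp (-(Complex.I * ((-τ : ℝ) : ℂ) * (k : ℂ) ^ 2))
          * aCoef (fc f) k) := by
    funext y
    exact tsum_congr fun k => by rw [fc_mkF _ Sa k]
  have Saτ : Summable fun k : ℤ =>
      ‖Complex.exp (-(Complex.I * ((-τ : ℝ) : ℂ) * (k : ℂ) ^ 2)) * aCoef (fc f) k‖ :=
    Sa.congr fun k => by rw [norm_mul, nexp_sq, one_mul]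
  have SX : Summable fun q : ℤ × ℤ =>
      (aCoef (fc f) q.2 * aCoef (fc f) (q.1 - q.2)) * fourier q.1 x := by
    refine Summable.of_norm_bounded (summable_shear_norm _ Sa) fun q => ?_
    rw [norm_mul, fourier_norm_one, mul_one, norm_mul]
  have SY : Summable fun q : ℤ × ℤ => Complex.exp (-(Complex.I * (τ : ℂ) * Phi q))
      * ((aCoef (fc f) q.2 * aCoef (fc f) (q.1 - q.2)) * fourier q.1 x) := by
    refine Summable.of_norm_bounded (summable_shear_norm _ Sa) fun q => ?_
    rw [norm_mul, nexp_phi, one_mul, norm_mul, norm_mul, fourier_norm_one, mul_one]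
  simp only [Pi.smul_apply, Pi.sub_apply, Pi.mul_apply, smul_eq_mul]
  rw [hL, hD, haτ]
  rw [mkF_sq _ Sa x, eitDxx_sq _ Saτ τ x]
  rw [tsum_congr fun q => term_massage τ (aCoef (fc f)) q x]
  rw [← SX.tsum_sub SY, ← tsum_mul_left]
  refine tsum_congr fun q => ?_
  have h := key_scalar τ (fc f) h0 q
  calc (∫ s in (0 : ℝ)..τ, Complex.exp (-(Complex.I * (s : ℂ) * Phi q)))
        * ((fc f q.2 * fc f (q.1 - q.2)) * fourier q.1 x)
      = ((∫ s in (0 : ℝ)..τ, Complex.exp (-(Complex.I * (s : ℂ) * Phi q)))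
          * (fc f q.2 * fc f (q.1 - q.2))) * fourier q.1 x := by ring
    _ = (Complex.I / 2 * (aCoef (fc f) q.2 * aCoef (fc f) (q.1 - q.2)
          - Complex.exp (-(Complex.I * (τ : ℂ) * Phi q))
              * (aCoef (fc f) q.2 * aCoef (fc f) (q.1 - q.2)))) * fourier q.1 x := by rw [h]
    _ = Complex.I / 2 * ((aCoef (fc f) q.2 * aCoef (fc f) (q.1 - q.2)) * fourier q.1 x
          - Complex.exp (-(Complex.I * (τ : ℂ) * Phi q))
              * ((aCoef (fc f) q.2 * aCoef (fc f) (q.1 - q.2)) * fourier q.1 x)) := by ring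
end
end
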